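/- arXiv:1705.03189 — 14 statements merged into one kernel-verified Lean document; each statement's English description precedes it below -/
import Mathlib

section
/- Let F : C ⥤ A be a fully faithful functor between abelian categories admitting a left adjoint j* : A ⥤ C which is exact. Then the inclusion i : Ker j* ⥤ A of the full subcategory of objects sent to zero by j* admits a right adjoint i^! , given on an object A by the kernel of the unit morphism η_A : A ⟶ F(j* A). -/
open CategoryTheory Limits

/-- If `F : C ⥤ A` is a fully faithful functor between abelian categories
with an exact left adjoint `jStar : A ⥤ C`, then the inclusion of the full subcategory
`Ker jStar` of objects sent to zero admits a right adjoint, given on objects by the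
kernel of the unit morphism `η_X : X ⟶ F(jStar X)`. -/
theorem stmt0 {C A : Type*} [Category C] [Category A] [Abelian C] [Abelian A]
    (F : C ⥤ A) (hF : F.Full) (hF' : F.Faithful)
    (jStar : A ⥤ C) (adj : jStar ⊣ F)
    (h1 : PreservesFiniteLimits jStar) (h2 : PreservesFiniteColimits jStar) :
    ∃ (G : A ⥤ ObjectProperty.FullSubcategory (fun X : A => IsZero (jStar.obj X)))
      (_ : ObjectProperty.ι (fun X : A => IsZero (jStar.obj X)) ⊣ G),
      ∀ X : A, Nonempty ((G.obj X).obj ≅ kernel (adj.unit.app X)) := by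
  haveI := hF
  haveI := hF'
  haveI : IsIso adj.counit := adj.counit_isIso_of_R_fully_faithful
  -- jStar of the kernel of the unit is zero
  have hiso : ∀ X : A, IsIso (jStar.map (adj.unit.app X)) := by
    intro X
    haveI : IsIso (jStar.map (adj.unit.app X) ≫ adj.counit.app (jStar.obj X)) := by
      erw [adj.left_triangle_components X]
      exact IsIso.id _
    exact IsIso.of_isIso_comp_right _ (adj.counit.app (jStar.obj X))
  have hzero : ∀ X : A, IsZero (jStar.obj (kernel (adj.unit.app X))) := by
    intro X
    haveI := hiso X
    haveI : Mono (jStar.map (adj.unit.app X)) := inferInstance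
    refine IsZero.of_iso ?_ (PreservesKernel.iso jStar (adj.unit.app X))
    exact IsZero.of_iso (isZero_zero C) (kernel.ofMono (jStar.map (adj.unit.app X)))
  -- the unit vanishes on objects of the kernel
  have hunit : ∀ Y : ObjectProperty.FullSubcategory (fun X : A => IsZero (jStar.obj X)),
      adj.unit.app Y.obj = 0 := by
    intro Y
    have hz : IsZero (F.obj (jStar.obj Y.obj)) := by
      haveI : F.IsRightAdjoint := ⟨jStar, ⟨adj⟩⟩
      exact F.map_isZero Y.property
    exact hz.eq_of_tgt _ _
  -- the hom equivalence
  let P := fun X : A => IsZero (jStar.obj X)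
  let i := ObjectProperty.ι P
  let G₀ : A → ObjectProperty.FullSubcategory P := fun X => ⟨kernel (adj.unit.app X), hzero X⟩
  have hcomp : ∀ (Y : ObjectProperty.FullSubcategory P) (X : A) (f : i.obj Y ⟶ X),
      f ≫ adj.unit.app X = 0 := by
    intro Y X f
    have := adj.unit.naturality f
    simp only [Functor.id_map] at this
    rw [this, show adj.unit.app (i.obj Y) = 0 from hunit Y, zero_comp]
  let e : ∀ (Y : ObjectProperty.FullSubcategory P) (X : A), (i.obj Y ⟶ X) ≃ (Y ⟶ G₀ X) := fun Y X =>
    { toFun := fun f => ObjectProperty.homMk (kernel.lift (adj.unit.app X) f (hcomp Y X f) : Y.obj ⟶ kernel _)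
      invFun := fun g => (g.hom : Y.obj ⟶ kernel _) ≫ kernel.ι _
      left_inv := fun f => kernel.lift_ι _ _ _
      right_inv := fun g => by
        apply ObjectProperty.hom_ext
        apply (cancel_mono (kernel.ι (adj.unit.app X))).1
        simp }
  have he : ∀ (Y' Y : ObjectProperty.FullSubcategory P) (X : A) (f : Y' ⟶ Y) (g : i.obj Y ⟶ X),
      e Y' X (i.map f ≫ g) = f ≫ e Y X g := by
    intro Y' Y X f g
    apply ObjectProperty.hom_ext
    apply (cancel_mono (kernel.ι (adj.unit.app X))).1
    simp only [e, Equiv.coe_fn_mk, ObjectProperty.homMk_hom, ObjectProperty.FullSubcategory.comp_hom]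
    rw [kernel.lift_ι]
    erw [Category.assoc, kernel.lift_ι]
    rfl
  exact ⟨Adjunction.rightAdjointOfEquiv e he, Adjunction.adjunctionOfEquivRight e he,
    fun X => ⟨Iso.refl _⟩⟩
end

section
/- Given a right recollement (B, A, C, i_*, i^!, j^*, j_*) of abelian categories, for every object A of A there is an exact sequence 0 ⟶ i_* i^! A ⟶ A ⟶ j_* j^* A ⟶ i_* B ⟶ 0 for some object B of B, where the first map is the counit of (i_*, i^!) and the second the unit of (j^*, j_*). -/
open CategoryTheory Limits

/-- A right recollement `(B, A, C, i_*, i^!, j^*, j_*)` of abelian categories: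
`i_*` and `j^*` are exact, `i_*` and `j_*` are fully faithful, `(i_*, i^!)` and
`(j^*, j_*)` are adjoint pairs, and the essential image of `i_*` is the kernel of `j^*`. -/
structure RightRecollement (B A C : Type*) [Category B] [Category A] [Category C]
    [Abelian B] [Abelian A] [Abelian C] where
  iStar : B ⥤ A
  iShriek : A ⥤ B
  jStar : A ⥤ C
  jLower : C ⥤ A
  iStar_preservesFiniteLimits : PreservesFiniteLimits iStar
  iStar_preservesFiniteColimits : PreservesFiniteColimits iStar
  jStar_preservesFiniteLimits : PreservesFiniteLimits jStar
  jStar_preservesFiniteColimits : PreservesFiniteColimits jStar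
  iStar_full : iStar.Full
  iStar_faithful : iStar.Faithful
  jLower_full : jLower.Full
  jLower_faithful : jLower.Faithful
  adj_i : iStar ⊣ iShriek
  adj_j : jStar ⊣ jLower
  im_eq_ker : ∀ X : A, (∃ Y : B, Nonempty (iStar.obj Y ≅ X)) ↔ IsZero (jStar.obj X)

/-- for every object `X` there is an exact sequence
`0 ⟶ i_* i^! X ⟶ X ⟶ j_* j^* X ⟶ i_* Y ⟶ 0` for some `Y : B`,
where the first map is the counit of `(i_*, i^!)` and the second the unit of `(j^*, j_*)`. -/
theorem stmt1 {B A C : Type*} [Category B] [Category A] [Category C]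
    [Abelian B] [Abelian A] [Abelian C] (R : RightRecollement B A C) (X : A) :
    ∃ (Y : B) (g : R.jLower.obj (R.jStar.obj X) ⟶ R.iStar.obj Y)
      (w₁ : R.adj_i.counit.app X ≫ R.adj_j.unit.app X = 0)
      (w₂ : R.adj_j.unit.app X ≫ g = 0),
      Mono (R.adj_i.counit.app X) ∧ Epi g ∧
      (ShortComplex.mk (R.adj_i.counit.app X) (R.adj_j.unit.app X) w₁).Exact ∧
      (ShortComplex.mk (R.adj_j.unit.app X) g w₂).Exact := by
  letI := R.iStar_full
  letI := R.iStar_faithful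
  letI := R.jLower_full
  letI := R.jLower_faithful
  letI := R.iStar_preservesFiniteLimits
  letI := R.iStar_preservesFiniteColimits
  letI := R.jStar_preservesFiniteLimits
  letI := R.jStar_preservesFiniteColimits
  letI : PreservesColimitsOfSize.{0,0} R.iStar := R.adj_i.leftAdjoint_preservesColimits
  letI : PreservesLimitsOfSize.{0,0} R.jLower := R.adj_j.rightAdjoint_preservesLimits
  set ε := R.adj_i.counit.app X with hε
  set η := R.adj_j.unit.app X with hη
  -- `j^* ∘ i_*` kills everything
  have hz : ∀ Z : B, IsZero (R.jStar.obj (R.iStar.obj Z)) :=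
    fun Z => (R.im_eq_ker _).mp ⟨Z, ⟨Iso.refl _⟩⟩
  -- `j^*.map η` is an isomorphism
  have tri := R.adj_j.left_triangle_components X
  haveI : IsIso (R.jStar.map η ≫ R.adj_j.counit.app (R.jStar.obj X)) := by
    rw [tri]; exact inferInstanceAs (IsIso (𝟙 _))
  haveI hiso : IsIso (R.jStar.map η) :=
    IsIso.of_isIso_comp_right (R.jStar.map η) (R.adj_j.counit.app (R.jStar.obj X))
  -- w₁ : ε ≫ η = 0
  have w₁ : ε ≫ η = 0 := by
    have hnat := R.adj_j.unit.naturality ε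
    simp only [Functor.id_map, Functor.comp_map] at hnat
    have hone : R.jStar.map ε = 0 := (hz (R.iShriek.obj X)).eq_of_src _ _
    calc ε ≫ η = R.adj_j.unit.app ((R.iShriek ⋙ R.iStar).obj X) ≫ R.jLower.map (R.jStar.map ε) :=
          hnat
      _ = 0 := by rw [hone, Functor.map_zero, comp_zero]
  -- factorization lemma: any map to `X` from an object killed by `j^*`
  -- factors through the counit ε
  have fac : ∀ (W : A) (f : W ⟶ X), IsZero (R.jStar.obj W) →
      ∃ u : W ⟶ R.iStar.obj (R.iShriek.obj X), f = u ≫ ε := by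
    intro W f hW
    obtain ⟨Z, ⟨φ⟩⟩ := (R.im_eq_ker W).mpr hW
    refine ⟨φ.inv ≫ R.iStar.map (R.adj_i.homEquiv Z X (φ.hom ≫ f)), ?_⟩
    have := R.adj_i.homEquiv_counit (X := Z) (Y := X)
      (g := R.adj_i.homEquiv Z X (φ.hom ≫ f))
    rw [Equiv.symm_apply_apply] at this
    rw [Category.assoc, hε, ← this, Iso.inv_hom_id_assoc]
  -- Mono ε
  have hmono : Mono ε := by
    apply CategoryTheory.Abelian.mono_of_kernel_ι_eq_zero
    have hKz : IsZero (R.jStar.obj (kernel ε)) :=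
      IsZero.of_mono (R.jStar.map (kernel.ι ε)) (hz (R.iShriek.obj X))
    obtain ⟨Z, ⟨ψ⟩⟩ := (R.im_eq_ker (kernel ε)).mpr hKz
    set u := ψ.hom ≫ kernel.ι ε with hu
    have hv : R.iStar.map (R.iStar.preimage u) ≫ ε = 0 := by
      rw [R.iStar.map_preimage, hu, Category.assoc, kernel.condition, comp_zero]
    have : R.iStar.preimage u = 0 := by
      apply (R.adj_i.homEquiv Z X).symm.injective
      rw [R.adj_i.homEquiv_counit, R.adj_i.homEquiv_counit, hv, Functor.map_zero, zero_comp]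
    have hu0 : u = 0 := by rw [← R.iStar.map_preimage (f := u), this, Functor.map_zero]
    have : kernel.ι ε = ψ.inv ≫ u := by rw [hu, Iso.inv_hom_id_assoc]
    rw [this, hu0, comp_zero]
  -- Exactness at X
  have hex1 : (ShortComplex.mk ε η w₁).Exact := by
    rw [ShortComplex.exact_iff_kernel_ι_comp_cokernel_π_zero]
    have hKz : IsZero (R.jStar.obj (kernel η)) := by
      have h0 : R.jStar.map (kernel.ι η) = 0 := by
        have : R.jStar.map (kernel.ι η) ≫ R.jStar.map η = 0 := by
          rw [← Functor.map_comp, kernel.condition, Functor.map_zero]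
        rwa [← cancel_mono (R.jStar.map η), zero_comp]
      exact IsZero.of_mono_eq_zero _ h0
    obtain ⟨u, hufac⟩ := fac (kernel η) (kernel.ι η) hKz
    show kernel.ι η ≫ cokernel.π ε = 0
    rw [hufac, Category.assoc, cokernel.condition, comp_zero]
  -- the cokernel of η lies in the image of i_*
  have hCz : IsZero (R.jStar.obj (cokernel η)) := by
    have h0 : R.jStar.map (cokernel.π η) = 0 := by
      have : R.jStar.map η ≫ R.jStar.map (cokernel.π η) = 0 := by
        rw [← Functor.map_comp, cokernel.condition, Functor.map_zero]
      rwa [← cancel_epi (R.jStar.map η), comp_zero]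
    exact IsZero.of_epi_eq_zero _ h0
  obtain ⟨Y, ⟨θ⟩⟩ := (R.im_eq_ker (cokernel η)).mpr hCz
  refine ⟨Y, cokernel.π η ≫ θ.inv, w₁, ?_, hmono, ?_, hex1, ?_⟩
  · rw [← Category.assoc, cokernel.condition, zero_comp]
  · exact epi_comp _ _
  · rw [ShortComplex.exact_iff_kernel_ι_comp_cokernel_π_zero]
    show kernel.ι (cokernel.π η ≫ θ.inv) ≫ cokernel.π η = 0
    have h2 := kernel.condition (cokernel.π η ≫ θ.inv)
    calc kernel.ι (cokernel.π η ≫ θ.inv) ≫ cokernel.π η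
        = (kernel.ι (cokernel.π η ≫ θ.inv) ≫ (cokernel.π η ≫ θ.inv)) ≫ θ.hom := by
          simp only [Category.assoc, Iso.inv_hom_id, Category.comp_id]
      _ = 0 := by rw [h2, zero_comp]
end

section
/- Given a right recollement (B, A, C, i_*, i^!, j^*, j_*) of abelian categories, for every object A of A and every object B of B, Ext^1(i_* B, j_* j^* A) = 0 and Hom(i_* B, j_* j^* A) = 0; that is, every short exact sequence 0 ⟶ j_* j^* A ⟶ X ⟶ i_* B ⟶ 0 splits. -/
open CategoryTheory Limits

theorem stmt2 {B A C : Type*} [Category B] [Category A] [Category C]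
    [Abelian B] [Abelian A] [Abelian C] (R : RightRecollement B A C) (X : A) (Y : B) :
    (∀ φ : R.iStar.obj Y ⟶ R.jLower.obj (R.jStar.obj X), φ = 0) ∧
    (∀ (E : A) (f : R.jLower.obj (R.jStar.obj X) ⟶ E) (g : E ⟶ R.iStar.obj Y)
      (w : f ≫ g = 0), (ShortComplex.mk f g w).ShortExact →
        ∃ r : E ⟶ R.jLower.obj (R.jStar.obj X), f ≫ r = 𝟙 _) := by
  have hzero : IsZero (R.jStar.obj (R.iStar.obj Y)) :=
    (R.im_eq_ker (R.iStar.obj Y)).mp ⟨Y, ⟨Iso.refl _⟩⟩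
  letI := R.jStar_preservesFiniteLimits
  letI := R.jStar_preservesFiniteColimits
  letI : R.jStar.IsLeftAdjoint := R.adj_j.isLeftAdjoint
  letI : R.jStar.PreservesZeroMorphisms := inferInstance
  constructor
  · intro φ
    have h1 : (R.adj_j.homEquiv _ _).symm φ = (R.adj_j.homEquiv _ _).symm 0 :=
      hzero.eq_of_src _ _
    have := congrArg (R.adj_j.homEquiv (R.iStar.obj Y) (R.jStar.obj X)) h1
    simpa using this
  · intro E f g w hS
    -- jStar.map f is an iso
    have hmap := hS.map_of_exact R.jStar
    have hg0 : R.jStar.map g = 0 := hzero.eq_of_tgt _ _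
    have hepi : Epi (R.jStar.map f) := hmap.exact.epi_f hg0
    have hmono : Mono (R.jStar.map f) := hmap.mono_f
    have hiso : IsIso (R.jStar.map f) := isIso_of_mono_of_epi _
    refine ⟨R.adj_j.unit.app E ≫ R.jLower.map (inv (R.jStar.map f) ≫
      R.adj_j.counit.app (R.jStar.obj X)), ?_⟩
    have hnat := R.adj_j.unit.naturality f
    dsimp at hnat ⊢
    rw [← Category.assoc, hnat, Category.assoc, ← R.jLower.map_comp,
      IsIso.hom_inv_id_assoc]
    exact R.adj_j.right_triangle_components (R.jStar.obj X)
end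

section
/- Given a right recollement (B, A, C, i_*, i^!, j^*, j_*) of abelian categories, the pair (Im i_*, Ker i^!) is a torsion pair in A: Hom(T, F) = 0 whenever T ∈ Im i_* and F ∈ Ker i^!, and every object A fits into an exact sequence 0 ⟶ i_* i^! A ⟶ A ⟶ coker(ω_A) ⟶ 0 with i_* i^! A ∈ Im i_* and coker(ω_A) ∈ Ker i^!, where ω is the counit of (i_*, i^!). -/
open CategoryTheory Limits

/-- `(Im i_*, Ker i^!)` is a torsion pair in `A`. -/
theorem stmt4 {B A C : Type*} [Category B] [Category A] [Category C]
    [Abelian B] [Abelian A] [Abelian C] (R : RightRecollement B A C) :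
    (∀ (T F : A), (∃ Y : B, Nonempty (R.iStar.obj Y ≅ T)) → IsZero (R.iShriek.obj F) →
      ∀ f : T ⟶ F, f = 0) ∧
    (∀ X : A, Mono (R.adj_i.counit.app X) ∧
      IsZero (R.iShriek.obj (cokernel (R.adj_i.counit.app X)))) := by
  haveI := R.iStar_full
  haveI := R.iStar_faithful
  haveI := R.jStar_preservesFiniteLimits
  haveI : PreservesLimitsOfSize.{0, 0} R.iShriek := R.adj_i.rightAdjoint_preservesLimits
  -- `j^*` kills everything in the image of `i_*`
  have hz : ∀ Y : B, IsZero (R.jStar.obj (R.iStar.obj Y)) := fun Y =>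
    (R.im_eq_ker _).mp ⟨Y, ⟨Iso.refl _⟩⟩
  -- Part 1 : Hom(T, F) = 0
  have hpart1 : ∀ (T F : A), (∃ Y : B, Nonempty (R.iStar.obj Y ≅ T)) →
      IsZero (R.iShriek.obj F) → ∀ f : T ⟶ F, f = 0 := by
    rintro T F ⟨Y, ⟨e⟩⟩ hF f
    have h1 := (R.adj_i.homEquiv Y F).symm_apply_apply (e.hom ≫ f)
    rw [Adjunction.homEquiv_counit, hF.eq_of_tgt (R.adj_i.homEquiv Y F (e.hom ≫ f)) 0,
      Functor.map_zero, zero_comp] at h1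
    rw [← e.inv_hom_id_assoc f, ← h1, comp_zero]
  -- counit components are mono
  have hmono : ∀ X : A, Mono (R.adj_i.counit.app X) := by
    intro X
    -- `i^!` of the kernel is zero, since `i^!(counit)` is an iso
    haveI : IsIso (R.iShriek.map (R.adj_i.counit.app X)) := by
      have h := R.adj_i.right_triangle_components X
      haveI : IsIso (R.adj_i.unit.app (R.iShriek.obj X) ≫
          R.iShriek.map (R.adj_i.counit.app X)) := by rw [h]; exact IsIso.id _
      exact IsIso.of_isIso_comp_left (R.adj_i.unit.app (R.iShriek.obj X)) _
    have hK1 : IsZero (R.iShriek.obj (kernel (R.adj_i.counit.app X))) := by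
      refine IsZero.of_iso ?_ (PreservesKernel.iso R.iShriek (R.adj_i.counit.app X))
      refine (IsZero.iff_id_eq_zero _).mpr ?_
      rw [← cancel_mono (kernel.ι (R.iShriek.map (R.adj_i.counit.app X))),
        ← cancel_mono (R.iShriek.map (R.adj_i.counit.app X))]
      simp [kernel.condition]
    -- the kernel lies in the image of `i_*`
    have hK2 : ∃ Y : B, Nonempty (R.iStar.obj Y ≅ kernel (R.adj_i.counit.app X)) := by
      refine (R.im_eq_ker _).mpr ?_
      refine IsZero.of_iso ?_ (PreservesKernel.iso R.jStar (R.adj_i.counit.app X))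
      exact IsZero.of_mono (kernel.ι (R.jStar.map (R.adj_i.counit.app X))) (hz _)
    -- hence the identity of the kernel vanishes
    have hid : 𝟙 (kernel (R.adj_i.counit.app X)) = 0 := hpart1 _ _ hK2 hK1 _
    exact Preadditive.mono_of_isZero_kernel _ ((IsZero.iff_id_eq_zero _).mpr hid)
  refine ⟨hpart1, fun X => ⟨hmono X, ?_⟩⟩
  haveI := hmono X
  set ω := R.adj_i.counit.app X with hω
  set Cq := cokernel ω with hCq
  set π : X ⟶ Cq := cokernel.π ω with hπ
  set g : R.iStar.obj (R.iShriek.obj Cq) ⟶ Cq := R.adj_i.counit.app Cq with hg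
  -- `j^* π` is mono : its kernel is `j^*` of the kernel of `π`, which is in `Im i_*`
  haveI hmonoπ : Mono (R.jStar.map π) := by
    apply Preadditive.mono_of_isZero_kernel
    refine IsZero.of_iso ?_ (PreservesKernel.iso R.jStar π).symm
    refine IsZero.of_iso (hz (R.iShriek.obj X)) (R.jStar.mapIso ?_)
    exact (Abelian.imageIsoImage ω ≪≫ imageMonoIsoSource ω)
  -- the pullback `P` of `π` and `g` has zero `j^*`, hence is in `Im i_*`
  have hPz : IsZero (R.jStar.obj (pullback π g)) := by
    refine IsZero.of_iso ?_ (PreservesPullback.iso R.jStar π g)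
    rw [IsZero.iff_id_eq_zero]
    have hsnd : pullback.snd (R.jStar.map π) (R.jStar.map g) = 0 := (hz _).eq_of_tgt _ 0
    have hfst : pullback.fst (R.jStar.map π) (R.jStar.map g) = 0 := by
      rw [← cancel_mono (R.jStar.map π), pullback.condition, hsnd, zero_comp, zero_comp]
    apply pullback.hom_ext <;> simp [hfst, hsnd]
  obtain ⟨W, ⟨e⟩⟩ := (R.im_eq_ker _).mpr hPz
  -- any map from `Im i_*` into `X` factors through `ω`, hence dies in `Cq`
  have hfactor : (e.hom ≫ pullback.fst π g) ≫ π = 0 := by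
    have h1 := (R.adj_i.homEquiv W X).symm_apply_apply (e.hom ≫ pullback.fst π g)
    rw [Adjunction.homEquiv_counit] at h1
    have h2 : ω ≫ π = 0 := cokernel.condition ω
    rw [← h1, ← hω, Category.assoc, h2, comp_zero]
  haveI : Epi π := by rw [hπ]; infer_instance
  have hfst0 : pullback.fst π g ≫ π = 0 := by
    rw [← cancel_epi e.hom, ← Category.assoc, hfactor, comp_zero]
  -- conclude that `g = counit.app Cq = 0`
  have hg0 : g = 0 := by
    rw [← cancel_epi (pullback.snd π g), ← pullback.condition, hfst0, comp_zero]
  rw [IsZero.iff_id_eq_zero]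
  have htri := R.adj_i.right_triangle_components Cq
  rw [← htri, ← hg, hg0, Functor.map_zero, comp_zero]
end

section
/- Given a right recollement (B, A, C, i_*, i^!, j^*, j_*) of abelian categories in which i^! is exact, the functor j_* is also exact. -/
open CategoryTheory Limits

/-- if `i^!` is exact then `j_*` is exact. -/
theorem stmt5 {B A C : Type*} [Category B] [Category A] [Category C]
    [Abelian B] [Abelian A] [Abelian C] (R : RightRecollement B A C)
    (h₁ : PreservesFiniteLimits R.iShriek) (h₂ : PreservesFiniteColimits R.iShriek) :
    Nonempty (PreservesFiniteLimits R.jLower) ∧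
    Nonempty (PreservesFiniteColimits R.jLower) := by
  have := R.iStar_full
  have := R.iStar_faithful
  have := R.jLower_full
  have := R.jLower_faithful
  have := R.jStar_preservesFiniteColimits
  have hjl : PreservesLimits R.jLower := R.adj_j.rightAdjoint_preservesLimits
  have hjfl : PreservesFiniteLimits R.jLower := inferInstance
  -- `i^! ∘ j_*` vanishes
  have hzero : ∀ Z : C, IsZero (R.iShriek.obj (R.jLower.obj Z)) := by
    intro Z
    rw [IsZero.iff_id_eq_zero]
    have hsub : ∀ g g' :
        R.iStar.obj (R.iShriek.obj (R.jLower.obj Z)) ⟶ R.jLower.obj Z, g = g' := by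
      intro g g'
      have hz : IsZero (R.jStar.obj (R.iStar.obj (R.iShriek.obj (R.jLower.obj Z)))) :=
        (R.im_eq_ker _).1 ⟨_, ⟨Iso.refl _⟩⟩
      have h := hz.eq_of_src ((R.adj_j.homEquiv _ _).symm g) ((R.adj_j.homEquiv _ _).symm g')
      calc g = (R.adj_j.homEquiv _ _) ((R.adj_j.homEquiv _ _).symm g) :=
              (Equiv.apply_symm_apply _ _).symm
        _ = (R.adj_j.homEquiv _ _) ((R.adj_j.homEquiv _ _).symm g') := by rw [h]
        _ = g' := Equiv.apply_symm_apply _ _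
    exact (R.adj_i.homEquiv _ _).symm.injective (hsub _ _)
  -- `j_*` preserves epimorphisms
  have hepi : R.jLower.PreservesEpimorphisms := by
    constructor
    intro X Y f hf
    have h := R.adj_j.counit.naturality f
    simp only [Functor.comp_map, Functor.id_map] at h
    have heq : R.jStar.map (R.jLower.map f) =
        R.adj_j.counit.app X ≫ f ≫ inv (R.adj_j.counit.app Y) := by
      rw [← Category.assoc, ← h, Category.assoc, IsIso.hom_inv_id, Category.comp_id]
    have hme : Epi (R.jStar.map (R.jLower.map f)) := by
      rw [heq]; infer_instance
    have hQ : IsZero (R.jStar.obj (cokernel (R.jLower.map f))) := by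
      have hc : IsZero (cokernel (R.jStar.map (R.jLower.map f))) :=
        IsZero.of_epi_eq_zero (cokernel.π _) (cokernel.π_of_epi _)
      exact hc.of_iso (PreservesCokernel.iso R.jStar (R.jLower.map f))
    obtain ⟨W, ⟨e⟩⟩ := (R.im_eq_ker _).2 hQ
    have hp : Epi (cokernel.π (R.jLower.map f) ≫ e.inv) := epi_comp _ _
    have hep : Epi (R.iShriek.map (cokernel.π (R.jLower.map f) ≫ e.inv)) :=
      R.iShriek.map_epi _
    have hzW2 : IsZero (R.iShriek.obj (R.iStar.obj W)) :=
      IsZero.of_epi (R.iShriek.map (cokernel.π (R.jLower.map f) ≫ e.inv)) (hzero Y)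
    have hW : IsZero W := hzW2.of_iso (asIso (R.adj_i.unit.app W))
    have hiW : IsZero (R.iStar.obj W) := R.iStar.map_isZero hW
    have hQ0 : IsZero (cokernel (R.jLower.map f)) := hiW.of_iso e.symm
    exact Abelian.epi_of_cokernel_π_eq_zero _ (hQ0.eq_of_tgt _ _)
  have hadd : R.jLower.Additive := Functor.additive_of_preserves_binary_products _
  have hph : R.jLower.PreservesHomology :=
    Functor.preservesHomology_of_preservesEpis_and_kernels _
  have hfc : PreservesFiniteColimits R.jLower :=
    Functor.preservesFiniteColimits_of_preservesHomology _
  exact ⟨⟨hjfl⟩, ⟨hfc⟩⟩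
end

section
/- Given a right recollement (B, A, C, i_*, i^!, j^*, j_*) of abelian categories in which i^! is exact, for every object A of A the sequence 0 ⟶ i_* i^! A ⟶ A ⟶ j_* j^* A ⟶ 0 (counit followed by unit) is a short exact sequence. -/
open CategoryTheory Limits

/-- if `i^!` is exact then for every `X` the counit-unit sequence
`0 ⟶ i_* i^! X ⟶ X ⟶ j_* j^* X ⟶ 0` is short exact. -/
theorem stmt6 {B A C : Type*} [Category B] [Category A] [Category C]
    [Abelian B] [Abelian A] [Abelian C] (R : RightRecollement B A C)
    (h₁ : PreservesFiniteLimits R.iShriek) (h₂ : PreservesFiniteColimits R.iShriek)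
    (X : A) :
    ∃ w : R.adj_i.counit.app X ≫ R.adj_j.unit.app X = 0,
      (ShortComplex.mk (R.adj_i.counit.app X) (R.adj_j.unit.app X) w).ShortExact := by
  haveI := R.iStar_preservesFiniteLimits
  haveI := R.iStar_preservesFiniteColimits
  haveI := R.jStar_preservesFiniteLimits
  haveI := R.jStar_preservesFiniteColimits
  haveI := R.iStar_full
  haveI := R.iStar_faithful
  haveI := R.jLower_full
  haveI := R.jLower_faithful
  haveI := R.adj_i.isLeftAdjoint
  haveI := R.adj_i.isRightAdjoint
  haveI := R.adj_j.isLeftAdjoint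
  haveI := R.adj_j.isRightAdjoint
  set I := R.iStar with hI
  set E := R.iShriek with hE
  set Js := R.jStar with hJs
  set Jl := R.jLower with hJl
  set adji := R.adj_i with hadji
  set adjj := R.adj_j with hadjj
  -- j^* i_* = 0
  have hJI : ∀ Y : B, IsZero (Js.obj (I.obj Y)) := fun Y =>
    (R.im_eq_ker (I.obj Y)).mp ⟨Y, ⟨Iso.refl _⟩⟩
  -- unit of adj_i is iso, counit of adj_j is iso
  haveI : IsIso adji.unit := inferInstance
  haveI : IsIso adjj.counit := inferInstance
  -- E.map of the counit is iso (right triangle)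
  haveI hEε : ∀ Z : A, IsIso (E.map (adji.counit.app Z)) := by
    intro Z
    have h := adji.right_triangle_components Z
    have : IsIso (adji.unit.app (E.obj Z) ≫ E.map (adji.counit.app Z)) := by
      rw [h]; exact IsIso.id _
    exact IsIso.of_isIso_comp_left (adji.unit.app (E.obj Z)) (E.map (adji.counit.app Z))
  -- Js.map of the unit is iso (left triangle)
  haveI hJη : ∀ Z : A, IsIso (Js.map (adjj.unit.app Z)) := by
    intro Z
    have h := adjj.left_triangle_components Z
    have : IsIso (Js.map (adjj.unit.app Z) ≫ adjj.counit.app (Js.obj Z)) := by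
      rw [h]; exact IsIso.id _
    exact IsIso.of_isIso_comp_right (Js.map (adjj.unit.app Z)) (adjj.counit.app (Js.obj Z))
  -- all hom-sets (I Y ⟶ Jl Z) are trivial
  have hom_triv : ∀ (Y : B) (Z : C) (f g : I.obj Y ⟶ Jl.obj Z), f = g := by
    intro Y Z f g
    exact (adjj.homEquiv _ _).symm.injective ((hJI Y).eq_of_src _ _)
  -- i^! j_* = 0
  have hEJl : ∀ Z : C, IsZero (E.obj (Jl.obj Z)) := by
    intro Z
    rw [IsZero.iff_id_eq_zero]
    exact (adji.homEquiv _ _).symm.injective (hom_triv _ _ _ _)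
  -- the composite is zero
  have w : adji.counit.app X ≫ adjj.unit.app X = 0 := hom_triv _ _ _ _
  refine ⟨w, ?_⟩
  -- Mono of the counit
  have hmono : Mono (adji.counit.app X) := by
    apply CategoryTheory.Abelian.mono_of_kernel_ι_eq_zero
    set k := kernel.ι (adji.counit.app X) with hk
    have hkε : k ≫ adji.counit.app X = 0 := kernel.condition _
    -- Js of the kernel is zero
    have hJsk : Js.map k = 0 := (hJI (E.obj X)).eq_of_tgt _ _
    haveI : Mono (Js.map k) := Js.map_mono k
    have hzK : IsZero (Js.obj (kernel (adji.counit.app X))) :=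
      IsZero.of_mono_eq_zero (Js.map k) hJsk
    obtain ⟨Y, ⟨e⟩⟩ := (R.im_eq_ker _).mpr hzK
    -- E.map k = 0
    have hEk : E.map k = 0 := by
      have h := E.congr_map hkε
      rw [E.map_comp, E.map_zero] at h
      haveI := hEε X
      exact (cancel_mono (E.map (adji.counit.app X))).mp (by rw [h, zero_comp])
    -- e.hom ≫ k = 0 via adjunction transpose
    have h0 : e.hom ≫ k = 0 := by
      apply (adji.homEquiv _ _).injective
      rw [Adjunction.homEquiv_unit, Adjunction.homEquiv_unit]
      rw [E.map_comp, hEk, comp_zero, comp_zero, E.map_zero, comp_zero]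
    calc k = e.inv ≫ (e.hom ≫ k) := by rw [← Category.assoc, e.inv_hom_id, Category.id_comp]
    _ = 0 := by rw [h0, comp_zero]
  -- Epi of the unit
  have hepi : Epi (adjj.unit.app X) := by
    apply CategoryTheory.Abelian.epi_of_cokernel_π_eq_zero
    set q := cokernel.π (adjj.unit.app X) with hq
    have hηq : adjj.unit.app X ≫ q = 0 := cokernel.condition _
    -- Js of the cokernel is zero
    have hJsq : Js.map q = 0 := by
      haveI := hJη X
      have h := Js.congr_map hηq
      rw [Js.map_comp, Js.map_zero] at h
      exact (cancel_epi (Js.map (adjj.unit.app X))).mp (by rw [h, comp_zero])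
    haveI : Epi (Js.map q) := Js.map_epi q
    have hzQ : IsZero (Js.obj (cokernel (adjj.unit.app X))) :=
      IsZero.of_epi_eq_zero (Js.map q) hJsq
    obtain ⟨Y, ⟨e⟩⟩ := (R.im_eq_ker _).mpr hzQ
    -- E of the cokernel is zero
    haveI : Epi (E.map q) := E.map_epi q
    have hEq : E.map q = 0 := (hEJl (Js.obj X)).eq_of_src _ _
    have hEQ : IsZero (E.obj (cokernel (adjj.unit.app X))) :=
      IsZero.of_epi_eq_zero (E.map q) hEq
    -- hence Y is zero, hence the cokernel is zero
    have hY : IsZero Y := hEQ.of_iso (asIso (adji.unit.app Y) ≪≫ E.mapIso e)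
    have hIY : IsZero (I.obj Y) := I.map_isZero hY
    have hQ : IsZero (cokernel (adjj.unit.app X)) := hIY.of_iso e.symm
    exact hQ.eq_of_tgt _ _
  -- Exactness in the middle: the counit is a kernel of the unit
  have hexact :
      (ShortComplex.mk (adji.counit.app X) (adjj.unit.app X) w).Exact := by
    set k := kernel.ι (adjj.unit.app X) with hk
    have hkη : k ≫ adjj.unit.app X = 0 := kernel.condition _
    -- Js of the kernel is zero
    have hJsk : Js.map k = 0 := by
      haveI := hJη X
      have h := Js.congr_map hkη
      rw [Js.map_comp, Js.map_zero] at h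
      exact (cancel_mono (Js.map (adjj.unit.app X))).mp (by rw [h, zero_comp])
    haveI : Mono (Js.map k) := Js.map_mono k
    have hzK : IsZero (Js.obj (kernel (adjj.unit.app X))) :=
      IsZero.of_mono_eq_zero (Js.map k) hJsk
    obtain ⟨Y, ⟨e⟩⟩ := (R.im_eq_ker _).mpr hzK
    apply ShortComplex.exact_of_f_is_kernel
    -- factor k through the counit
    set g0 : Y ⟶ E.obj X := adji.homEquiv Y X (e.hom ≫ k) with hg0
    have hfac : I.map g0 ≫ adji.counit.app X = e.hom ≫ k := by
      have h := (adji.homEquiv Y X).symm_apply_apply (e.hom ≫ k)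
      rw [Adjunction.homEquiv_counit] at h
      exact h
    exact KernelFork.IsLimit.ofι _ _
      (fun {T} t ht => kernel.lift (adjj.unit.app X) t ht ≫ e.inv ≫ I.map g0)
      (fun {T} t ht => by
        simp only [Category.assoc, hfac]
        rw [← Category.assoc e.inv, e.inv_hom_id, Category.id_comp]
        exact kernel.lift_ι _ _ _)
      (fun {T} t ht m hm => by
        haveI := hmono
        apply (cancel_mono (adji.counit.app X)).mp
        rw [hm]
        simp only [Category.assoc, hfac]
        rw [← Category.assoc e.inv, e.inv_hom_id, Category.id_comp]
        exact (kernel.lift_ι _ _ _).symm)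
  exact { exact := hexact, mono_f := hmono, epi_g := hepi }
end

section
/- Let (U, V) and (V, W) be torsion pairs in an abelian category A, with U closed under subobjects and W closed under quotient objects. Then U = W. -/
open CategoryTheory Limits

variable {A : Type*} [Category A] [Abelian A]

/-- A torsion pair `(T, F)` in an abelian category: homs from `T`-objects to
`F`-objects vanish, and every object `X` admits a short exact sequence
`0 ⟶ T ⟶ X ⟶ F ⟶ 0` with `T ∈ T` and `F ∈ F` (encoded as: a mono `f : T ⟶ X`
with `T ∈ T` and `cokernel f ∈ F`). -/
structure TorsionPair (T F : A → Prop) : Prop where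
  hom_zero : ∀ (X Y : A), T X → F Y → ∀ f : X ⟶ Y, f = 0
  decomp : ∀ X : A, ∃ (T₀ : A) (f : T₀ ⟶ X), Mono f ∧ T T₀ ∧ F (cokernel f)

/-- Closed under subobjects. -/
def ClosedUnderSubobjects (P : A → Prop) : Prop :=
  ∀ (X Y : A) (f : X ⟶ Y), Mono f → P Y → P X

/-- Closed under quotient objects. -/
def ClosedUnderQuotients (P : A → Prop) : Prop :=
  ∀ (X Y : A) (f : X ⟶ Y), Epi f → P X → P Y


/-- if `(U, V)` and `(V, W)` are torsion pairs with `U` closed under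
subobjects and `W` closed under quotient objects, then `U = W`. -/
theorem stmt8 (U V W : A → Prop) (h₁ : TorsionPair U V) (h₂ : TorsionPair V W)
    (hU : ClosedUnderSubobjects U) (hW : ClosedUnderQuotients W) :
    ∀ X : A, U X ↔ W X := by
  intro X
  constructor
  · intro hUX
    obtain ⟨T₀, f, hm, hVT, hWc⟩ := h₂.decomp X
    have hUT : U T₀ := hU T₀ X f hm hUX
    have hz : IsZero T₀ := by
      rw [IsZero.iff_id_eq_zero]
      exact h₁.hom_zero T₀ T₀ hUT hVT _
    have hf0 : f = 0 := hz.eq_zero_of_src f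
    subst hf0
    exact hW (cokernel (0 : T₀ ⟶ X)) X cokernelZeroIsoTarget.hom inferInstance hWc
  · intro hWX
    obtain ⟨T₀, f, hm, hUT, hVc⟩ := h₁.decomp X
    have hWc : W (cokernel f) := hW X (cokernel f) (cokernel.π f) inferInstance hWX
    have hz : IsZero (cokernel f) := by
      rw [IsZero.iff_id_eq_zero]
      exact h₂.hom_zero _ _ hVc hWc _
    have : Epi f := Abelian.epi_of_cokernel_π_eq_zero f (hz.eq_zero_of_tgt _)
    have : IsIso f := isIso_of_mono_of_epi f
    exact hU X T₀ (inv f) inferInstance hUT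
end

section
/- Let (U, V) and (V, W) be torsion pairs in an abelian category A, with U closed under subobjects and W closed under quotient objects. Then every object A of A is isomorphic to the direct sum A_U ⊕ A^V, where 0 ⟶ A_U ⟶ A ⟶ A^V ⟶ 0 is the torsion decomposition of A with respect to (U, V). -/
open CategoryTheory Limits

variable {A : Type*} [Category A] [Abelian A]

/-- under the hypotheses of Statement 8, every object `X` is isomorphic
to `T₀ ⊞ cokernel f` for any torsion decomposition `0 ⟶ T₀ ⟶ X ⟶ cokernel f ⟶ 0`
of `X` with respect to `(U, V)`. -/
theorem stmt9 (U V W : A → Prop) (h₁ : TorsionPair U V) (h₂ : TorsionPair V W)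
    (hU : ClosedUnderSubobjects U) (hW : ClosedUnderQuotients W)
    (X T₀ : A) (f : T₀ ⟶ X) (hf : Mono f) (hT : U T₀) (hF : V (cokernel f)) :
    Nonempty (X ≅ T₀ ⊞ cokernel f) := by
  -- take a (V, W)-torsion decomposition of X
  obtain ⟨V₀, g, hg, hV₀, hW₀⟩ := h₂.decomp X
  set p : X ⟶ cokernel g := cokernel.π g with hp
  -- `f ≫ p` is mono
  have hmono : Mono (f ≫ p) := by
    apply Abelian.mono_of_kernel_ι_eq_zero
    have hcond : (kernel.ι (f ≫ p) ≫ f) ≫ cokernel.π g = 0 := by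
      rw [Category.assoc, ← hp, kernel.condition]
    have hk : Abelian.monoLift g _ hcond ≫ g = kernel.ι (f ≫ p) ≫ f :=
      Abelian.monoLift_comp g _ hcond
    have hKU : U (kernel (f ≫ p)) :=
      hU _ _ (kernel.ι (f ≫ p)) inferInstance hT
    have hz : Abelian.monoLift g _ hcond = 0 := h₁.hom_zero _ _ hKU hV₀ _
    rw [hz, zero_comp] at hk
    rw [← cancel_mono f, zero_comp, hk]
  -- `f ≫ p` is epi
  have hepi : Epi (f ≫ p) := by
    apply Abelian.epi_of_cokernel_π_eq_zero
    have hWc : W (cokernel (f ≫ p)) :=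
      hW _ _ (cokernel.π (f ≫ p)) inferInstance hW₀
    have hcond : f ≫ p ≫ cokernel.π (f ≫ p) = 0 := by
      rw [← Category.assoc, cokernel.condition]
    set u : cokernel f ⟶ cokernel (f ≫ p) := cokernel.desc f _ hcond with hu
    have hfac : cokernel.π f ≫ u = p ≫ cokernel.π (f ≫ p) := cokernel.π_desc _ _ _
    have hz : u = 0 := h₂.hom_zero _ _ hF hWc u
    rw [hz, comp_zero] at hfac
    rw [← cancel_epi p, comp_zero, ← hfac]
  have : IsIso (f ≫ p) := isIso_of_mono_of_epi _
  -- hence `f` has a retraction, so the torsion short exact sequence splits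
  set S : CategoryTheory.ShortComplex A :=
    CategoryTheory.ShortComplex.mk f (cokernel.π f) (cokernel.condition f) with hS
  have hSexact : S.Exact := S.exact_of_f_is_kernel
    (Abelian.monoIsKernelOfCokernel _ (colimit.isColimit _))
  have hretr : S.f ≫ (p ≫ inv (f ≫ p)) = 𝟙 S.X₁ := by
    show f ≫ p ≫ inv (f ≫ p) = 𝟙 T₀
    rw [← Category.assoc, IsIso.hom_inv_id]
  have hgepi : Epi S.g := by
    show Epi (cokernel.π f); infer_instance
  exact ⟨(CategoryTheory.ShortComplex.Splitting.ofExactOfRetraction S hSexact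
    (p ≫ inv (f ≫ p)) hretr hgepi).isoBinaryBiproduct⟩
end

section
/- Let (U, V) and (V, W) be torsion pairs in an abelian category A with U closed under subobjects and W closed under quotient objects. Then U ∩ V = {0} and the assignment A ↦ (A_U, A^V) defines an equivalence of categories A ≃ U × V. -/
open CategoryTheory Limits

variable {A : Type*} [Category A] [Abelian A]

section Aux

variable {U V W : A → Prop}

lemma aux_isZero (h₁ : TorsionPair U V) {X : A} (hu : U X) (hv : V X) : IsZero X := by
  rw [IsZero.iff_id_eq_zero]
  exact h₁.hom_zero X X hu hv (𝟙 X)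

lemma aux_hom_VU (h₁ : TorsionPair U V) (h₂ : TorsionPair V W)
    (hU : ClosedUnderSubobjects U) {X Y : A} (hx : V X) (hy : U Y) (f : X ⟶ Y) : f = 0 := by
  have hI : U (Abelian.image f) := hU _ _ (Abelian.image.ι f) inferInstance hy
  obtain ⟨S, g, hg, hS, hco⟩ := h₂.decomp (Abelian.image f)
  haveI := hg
  have h0 : Abelian.factorThruImage f ≫ cokernel.π g = 0 := h₂.hom_zero _ _ hx hco _
  have hπ : cokernel.π g = 0 := by
    rw [← cancel_epi (Abelian.factorThruImage f), h0, comp_zero]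
  haveI : Epi g := Abelian.epi_of_cokernel_π_eq_zero _ hπ
  haveI : IsIso g := isIso_of_mono_of_epi g
  have hz : IsZero (Abelian.image f) := by
    rw [IsZero.iff_id_eq_zero, ← IsIso.inv_hom_id g, h₁.hom_zero _ _ hI hS (inv g), zero_comp]
  rw [← Abelian.image.fac f, hz.eq_of_tgt (Abelian.factorThruImage f) 0, zero_comp]

lemma aux_section (h₁ : TorsionPair U V) (h₂ : TorsionPair V W)
    (hU : ClosedUnderSubobjects U) (hW : ClosedUnderQuotients W)
    {T₀ X : A} (f : T₀ ⟶ X) [Mono f] (hT : U T₀) (hC : V (cokernel f)) :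
    ∃ s : cokernel f ⟶ X, s ≫ cokernel.π f = 𝟙 _ := by
  obtain ⟨S, g, hg, hS, hco⟩ := h₂.decomp X
  haveI := hg
  have hcond : (kernel.ι (g ≫ cokernel.π f) ≫ g) ≫ cokernel.π f = 0 := by
    rw [Category.assoc]; exact kernel.condition _
  haveI hm : Mono (g ≫ cokernel.π f) := by
    apply Abelian.mono_of_kernel_ι_eq_zero
    have hk : Abelian.monoLift f _ hcond ≫ f = kernel.ι (g ≫ cokernel.π f) ≫ g :=
      Abelian.monoLift_comp f _ hcond
    have hmk : Mono (Abelian.monoLift f _ hcond) := by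
      have : Mono (Abelian.monoLift f _ hcond ≫ f) := by
        rw [hk]; exact mono_comp _ _
      exact mono_of_mono _ f
    have hKU : U (kernel (g ≫ cokernel.π f)) := hU _ _ _ hmk hT
    exact h₁.hom_zero _ _ hKU hS _
  have hdesc : g ≫ cokernel.π f ≫ cokernel.π (g ≫ cokernel.π f) = 0 := by
    rw [← Category.assoc]; exact cokernel.condition _
  have hepi : Epi (cokernel.desc g (cokernel.π f ≫ cokernel.π (g ≫ cokernel.π f)) hdesc) :=
    epi_of_epi_fac (cokernel.π_desc g _ hdesc)
  have hWc : W (cokernel (g ≫ cokernel.π f)) := hW _ _ _ hepi hco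
  have hz : cokernel.π (g ≫ cokernel.π f) = 0 := h₂.hom_zero _ _ hC hWc _
  haveI : Epi (g ≫ cokernel.π f) := Abelian.epi_of_cokernel_π_eq_zero _ hz
  haveI : IsIso (g ≫ cokernel.π f) := isIso_of_mono_of_epi _
  exact ⟨inv (g ≫ cokernel.π f) ≫ g, by rw [Category.assoc, IsIso.inv_hom_id]⟩

lemma aux_biprodIso (h₁ : TorsionPair U V) (h₂ : TorsionPair V W)
    (hU : ClosedUnderSubobjects U) (hW : ClosedUnderQuotients W)
    {T₀ X : A} (f : T₀ ⟶ X) [Mono f] (hT : U T₀) (hC : V (cokernel f)) :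
    Nonempty (X ≅ T₀ ⊞ cokernel f) := by
  obtain ⟨s, hs⟩ := aux_section h₁ h₂ hU hW f hT hC
  let S : ShortComplex A := ShortComplex.mk f (cokernel.π f) (cokernel.condition f)
  have hex : S.Exact := S.exact_of_g_is_cokernel (cokernelIsCokernel f)
  exact ⟨(ShortComplex.Splitting.ofExactOfSection S hex s hs inferInstance).isoBinaryBiproduct⟩

lemma aux_unique (h₁ : TorsionPair U V)
    {X T₀ T F : A} (f : T₀ ⟶ X) [Mono f] (hT₀ : U T₀) (hC : V (cokernel f))
    (hT : U T) (hF : V F) (e : T ⊞ F ≅ X) :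
    Nonempty (T ≅ T₀) ∧ Nonempty (F ≅ cokernel f) := by
  set i : T ⟶ X := biprod.inl ≫ e.hom with hi
  haveI : Mono i := mono_comp _ _
  let κ : cokernel i ≅ F := (cokernelCompIsIso biprod.inl e.hom) ≪≫ cokernelBiprodInlIso (X := T) (Y := F)
  have hfi : f ≫ cokernel.π i = 0 := by
    rw [← cancel_mono κ.hom, Category.assoc, zero_comp]
    exact h₁.hom_zero T₀ F hT₀ hF (f ≫ cokernel.π i ≫ κ.hom)
  have hif : i ≫ cokernel.π f = 0 := h₁.hom_zero T _ hT hC _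
  have hu : Abelian.monoLift i f hfi ≫ i = f := Abelian.monoLift_comp i f hfi
  have hv : Abelian.monoLift f i hif ≫ f = i := Abelian.monoLift_comp f i hif
  have huv : Abelian.monoLift i f hfi ≫ Abelian.monoLift f i hif = 𝟙 T₀ := by
    rw [← cancel_mono f, Category.assoc, hv, hu, Category.id_comp]
  have hvu : Abelian.monoLift f i hif ≫ Abelian.monoLift i f hfi = 𝟙 T := by
    rw [← cancel_mono i, Category.assoc, hu, hv, Category.id_comp]
  refine ⟨⟨⟨Abelian.monoLift f i hif, Abelian.monoLift i f hfi, hvu, huv⟩⟩,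
    ⟨κ.symm ≪≫ cokernel.mapIso i f ⟨Abelian.monoLift f i hif, Abelian.monoLift i f hfi, hvu, huv⟩
      (Iso.refl X) (by rw [Iso.refl_hom, Category.comp_id]; exact hv.symm)⟩⟩

/-- The biproduct functor from the product of the two full subcategories. -/
noncomputable def biprodPairFunctor (U V : A → Prop) :
    ObjectProperty.FullSubcategory U × ObjectProperty.FullSubcategory V ⥤ A where
  obj P := P.1.obj ⊞ P.2.obj
  map φ := biprod.map φ.1.hom φ.2.hom
  map_id P := by
    apply biprod.hom_ext
    · rw [biprod.map_fst, Category.id_comp]; exact Category.comp_id _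
    · rw [biprod.map_snd, Category.id_comp]; exact Category.comp_id _
  map_comp φ ψ := by
    apply biprod.hom_ext
    · rw [biprod.map_fst, Category.assoc, biprod.map_fst, biprod.map_fst_assoc]; rfl
    · rw [biprod.map_snd, Category.assoc, biprod.map_snd, biprod.map_snd_assoc]; rfl

end Aux

/-- under the hypotheses of Statement 8, `U ∩ V = {0}` and
`X ↦ (X_U, X^V)` defines an equivalence `A ≌ U × V`. -/
theorem stmt10 (U V W : A → Prop) (h₁ : TorsionPair U V) (h₂ : TorsionPair V W)
    (hU : ClosedUnderSubobjects U) (hW : ClosedUnderQuotients W) :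
    (∀ X : A, U X → V X → IsZero X) ∧
    ∃ E : A ≌ (ObjectProperty.FullSubcategory U × ObjectProperty.FullSubcategory V),
      ∀ (X T₀ : A) (f : T₀ ⟶ X), Mono f → U T₀ → V (cokernel f) →
        Nonempty ((E.functor.obj X).1.obj ≅ T₀) ∧
        Nonempty ((E.functor.obj X).2.obj ≅ cokernel f) := by
  refine ⟨fun X hu hv => aux_isZero h₁ hu hv, ?_⟩
  let G := biprodPairFunctor (A := A) U V
  haveI : G.Faithful := by
    constructor
    intro P Q φ ψ h
    have h1 : biprod.inl ≫ G.map φ ≫ biprod.fst = biprod.inl ≫ G.map ψ ≫ biprod.fst := by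
      rw [h]
    have h2 : biprod.inr ≫ G.map φ ≫ biprod.snd = biprod.inr ≫ G.map ψ ≫ biprod.snd := by
      rw [h]
    simp only [G, biprodPairFunctor, biprod.inl_map_assoc, biprod.inr_map_assoc,
      biprod.inl_fst, biprod.inr_snd, Category.comp_id] at h1 h2
    exact Prod.ext (ObjectProperty.hom_ext _ h1) (ObjectProperty.hom_ext _ h2)
  haveI : G.Full := by
    constructor
    intro P Q φ
    have hφ : ∃ ψ : P.1.obj ⊞ P.2.obj ⟶ Q.1.obj ⊞ Q.2.obj, ψ = φ := ⟨φ, rfl⟩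
    obtain ⟨ψ, rfl⟩ := hφ
    refine ⟨(ObjectProperty.homMk (biprod.inl ≫ ψ ≫ biprod.fst : P.1.obj ⟶ Q.1.obj),
      ObjectProperty.homMk (biprod.inr ≫ ψ ≫ biprod.snd : P.2.obj ⟶ Q.2.obj)), ?_⟩
    dsimp only [G, biprodPairFunctor]
    apply biprod.hom_ext' (X := P.1.obj) (Y := P.2.obj)
    · apply biprod.hom_ext (X := Q.1.obj) (Y := Q.2.obj)
      · simp
      · simp
        exact (h₁.hom_zero _ _ P.1.property Q.2.property
          (biprod.inl ≫ ψ ≫ biprod.snd)).symm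
    · apply biprod.hom_ext (X := Q.1.obj) (Y := Q.2.obj)
      · simp
        exact (aux_hom_VU h₁ h₂ hU P.2.property Q.1.property
          (biprod.inr ≫ ψ ≫ biprod.fst)).symm
      · simp
  haveI : G.EssSurj := by
    constructor
    intro X
    obtain ⟨T₀, f, hm, hT, hC⟩ := h₁.decomp X
    haveI := hm
    obtain ⟨e⟩ := aux_biprodIso h₁ h₂ hU hW f hT hC
    exact ⟨(⟨T₀, hT⟩, ⟨cokernel f, hC⟩), ⟨e.symm⟩⟩
  haveI : G.IsEquivalence := {}
  refine ⟨G.asEquivalence.symm, ?_⟩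
  intro X T₀ f hm hT hC
  haveI := hm
  have e0 : ((G.asEquivalence.symm.functor.obj X).1.obj ⊞
      (G.asEquivalence.symm.functor.obj X).2.obj ≅ X) :=
    (G.asEquivalence.symm.unitIso.app X).symm
  exact aux_unique h₁ f hT hC (G.asEquivalence.symm.functor.obj X).1.property
    (G.asEquivalence.symm.functor.obj X).2.property e0
end

section
/- Given a recollement (B, A, C, i^*, i_*, i^!, j_!, j^*, j_*) of abelian categories in which both i^* and i^! are exact, the functors i^* and i^! are naturally isomorphic, j_! and j_* are naturally isomorphic, and A is equivalent to the product category B × C. -/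
open CategoryTheory Limits

/-- A recollement `(B, A, C, i^*, i_*, i^!, j_!, j^*, j_*)` of abelian categories:
`(i^*, i_*)`, `(i_*, i^!)`, `(j_!, j^*)`, `(j^*, j_*)` are adjoint pairs,
`i_*`, `j_!`, `j_*` are fully faithful, and the essential image of `i_*` is the
full subcategory of objects `X` with `j^* X ≅ 0`. -/
structure Recollement (B A C : Type*) [Category B] [Category A] [Category C]
    [Abelian B] [Abelian A] [Abelian C] where
  iUpper : A ⥤ B      -- i^*
  iStar : B ⥤ A       -- i_*
  iShriek : A ⥤ B     -- i^!
  jShriek : C ⥤ A     -- j_!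
  jStar : A ⥤ C       -- j^*
  jLower : C ⥤ A      -- j_*
  adj_i₁ : iUpper ⊣ iStar
  adj_i₂ : iStar ⊣ iShriek
  adj_j₁ : jShriek ⊣ jStar
  adj_j₂ : jStar ⊣ jLower
  iStar_full : iStar.Full
  iStar_faithful : iStar.Faithful
  jShriek_full : jShriek.Full
  jShriek_faithful : jShriek.Faithful
  jLower_full : jLower.Full
  jLower_faithful : jLower.Faithful
  im_eq_ker : ∀ X : A, (∃ Y : B, Nonempty (iStar.obj Y ≅ X)) ↔ IsZero (jStar.obj X)

section Aux

variable {D E : Type*} [Category D] [Category E] [Abelian D] [Abelian E]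

/-- A left adjoint between abelian categories is additive. -/
lemma RecAux.additive_of_left {L : D ⥤ E} {R' : E ⥤ D} (adj : L ⊣ R') : L.Additive := by
  haveI := adj.isLeftAdjoint
  haveI : PreservesColimitsOfSize.{0, 0} L := adj.leftAdjoint_preservesColimits
  haveI := preservesBinaryBiproducts_of_preservesBinaryCoproducts L
  exact Functor.additive_of_preservesBinaryBiproducts L

/-- A right adjoint between abelian categories is additive. -/
lemma RecAux.additive_of_right {L : D ⥤ E} {R' : E ⥤ D} (adj : L ⊣ R') : R'.Additive := by
  haveI := adj.isRightAdjoint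
  haveI : PreservesLimitsOfSize.{0, 0} R' := adj.rightAdjoint_preservesLimits
  haveI := preservesBinaryBiproducts_of_preservesBinaryProducts R'
  exact Functor.additive_of_preservesBinaryBiproducts R'

lemma RecAux.isZero_kernel_of_isIso {X Y : D} (f : X ⟶ Y) [IsIso f] : IsZero (kernel f) :=
  IsZero.of_mono_eq_zero (kernel.ι f) (kernel.ι_of_mono f)

lemma RecAux.isZero_cokernel_of_isIso {X Y : D} (f : X ⟶ Y) [IsIso f] : IsZero (cokernel f) :=
  IsZero.of_epi_eq_zero (cokernel.π f) (cokernel.π_of_epi f)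

lemma RecAux.isIso_map_biprod_inl (F : D ⥤ E) [F.Additive] (I J : D)
    (hJ : IsZero (F.obj J)) : IsIso (F.map (biprod.inl : I ⟶ I ⊞ J)) := by
  refine ⟨F.map biprod.fst, ?_, ?_⟩
  · rw [← F.map_comp, biprod.inl_fst, F.map_id]
  · have h0 : F.map (biprod.inr : J ⟶ I ⊞ J) = 0 := hJ.eq_of_src _ _
    have h : (biprod.fst ≫ biprod.inl : I ⊞ J ⟶ I ⊞ J) =
        𝟙 _ - biprod.snd ≫ biprod.inr := by
      rw [eq_sub_iff_add_eq, biprod.total]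
    rw [← F.map_comp, h, F.map_sub, F.map_id, F.map_comp, h0, comp_zero, sub_zero]

lemma RecAux.isIso_map_biprod_inr (F : D ⥤ E) [F.Additive] (I J : D)
    (hI : IsZero (F.obj I)) : IsIso (F.map (biprod.inr : J ⟶ I ⊞ J)) := by
  refine ⟨F.map biprod.snd, ?_, ?_⟩
  · rw [← F.map_comp, biprod.inr_snd, F.map_id]
  · have h0 : F.map (biprod.inl : I ⟶ I ⊞ J) = 0 := hI.eq_of_src _ _
    have h : (biprod.snd ≫ biprod.inr : I ⊞ J ⟶ I ⊞ J) =
        𝟙 _ - biprod.fst ≫ biprod.inl := by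
      rw [eq_sub_iff_add_eq, add_comm, biprod.total]
    rw [← F.map_comp, h, F.map_sub, F.map_id, F.map_comp, h0, comp_zero, sub_zero]

lemma RecAux.isIso_biprod_inr {I J : D} (hI : IsZero I) :
    IsIso (biprod.inr : J ⟶ I ⊞ J) := by
  refine ⟨biprod.snd, biprod.inr_snd, ?_⟩
  have h0 : (biprod.inl : I ⟶ I ⊞ J) = 0 := hI.eq_of_src _ _
  rw [eq_comm, ← sub_eq_zero, sub_eq_iff_eq_add, ← biprod.total, h0, comp_zero, zero_add]

end Aux

namespace Recollement

variable {B A C : Type*} [Category B] [Category A] [Category C]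
    [Abelian B] [Abelian A] [Abelian C] (R : Recollement B A C)

lemma isZero_jStar_iStar (Y : B) : IsZero (R.jStar.obj (R.iStar.obj Y)) :=
  (R.im_eq_ker _).mp ⟨Y, ⟨Iso.refl _⟩⟩

lemma isZero_iUpper_jShriek (Z : C) : IsZero (R.iUpper.obj (R.jShriek.obj Z)) := by
  rw [IsZero.iff_id_eq_zero]
  apply (R.adj_i₁.homEquiv (R.jShriek.obj Z) (R.iUpper.obj (R.jShriek.obj Z))).injective
  apply (R.adj_j₁.homEquiv Z _).injective
  exact (R.isZero_jStar_iStar _).eq_of_tgt _ _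

lemma isZero_iShriek_jLower (Z : C) : IsZero (R.iShriek.obj (R.jLower.obj Z)) := by
  rw [IsZero.iff_id_eq_zero]
  apply ((R.adj_i₂.homEquiv (R.iShriek.obj (R.jLower.obj Z)) (R.jLower.obj Z)).symm).injective
  apply ((R.adj_j₂.homEquiv _ Z).symm).injective
  exact (R.isZero_jStar_iStar _).eq_of_src _ _

/-- If `j^* X` and `i^! X` are zero then `X` is zero. -/
lemma isZero_of_pieces (X : A) (hj : IsZero (R.jStar.obj X))
    (hi : IsZero (R.iShriek.obj X)) : IsZero X := by
  haveI := R.iStar_full; haveI := R.iStar_faithful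
  obtain ⟨Y, ⟨e⟩⟩ := (R.im_eq_ker X).mpr hj
  have hY : IsZero Y := by
    have h1 : IsZero (R.iShriek.obj (R.iStar.obj Y)) := hi.of_iso (R.iShriek.mapIso e)
    exact h1.of_iso (asIso (R.adj_i₂.unit.app Y))
  haveI := R.adj_i₁.isRightAdjoint
  exact (R.iStar.map_isZero hY).of_iso e.symm

/-- The counit `i_* i^! X ⟶ X` is a monomorphism. -/
lemma mono_counit_i₂ (X : A) : Mono (R.adj_i₂.counit.app X) := by
  haveI := R.iStar_full; haveI := R.iStar_faithful
  set f := R.adj_i₂.counit.app X with hf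
  have hj : IsZero (R.jStar.obj (kernel f)) := by
    haveI : PreservesLimitsOfSize.{0, 0} R.jStar := R.adj_j₁.rightAdjoint_preservesLimits
    have h1 : IsZero (kernel (R.jStar.map f)) :=
      IsZero.of_mono_eq_zero (kernel.ι _) ((R.isZero_jStar_iStar _).eq_of_tgt _ _)
    exact h1.of_iso (PreservesKernel.iso R.jStar f)
  have hi : IsZero (R.iShriek.obj (kernel f)) := by
    haveI : PreservesLimitsOfSize.{0, 0} R.iShriek := R.adj_i₂.rightAdjoint_preservesLimits
    haveI : IsIso (R.iShriek.map f) := inferInstance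
    exact (RecAux.isZero_kernel_of_isIso (R.iShriek.map f)).of_iso
      (PreservesKernel.iso R.iShriek f)
  exact Abelian.mono_of_kernel_ι_eq_zero _
    ((R.isZero_of_pieces _ hj hi).eq_of_src _ _)

/-- If `i^*` is left exact then `i^! j_! = 0`. -/
lemma isZero_iShriek_jShriek (h₁ : PreservesFiniteLimits R.iUpper) (Z : C) :
    IsZero (R.iShriek.obj (R.jShriek.obj Z)) := by
  haveI := R.iStar_full; haveI := R.iStar_faithful
  haveI := h₁
  haveI : R.iUpper.PreservesMonomorphisms := inferInstance
  haveI := R.mono_counit_i₂ (R.jShriek.obj Z)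
  haveI : Mono (R.iUpper.map (R.adj_i₂.counit.app (R.jShriek.obj Z))) := inferInstance
  have h0 : IsZero (R.iUpper.obj (R.iStar.obj (R.iShriek.obj (R.jShriek.obj Z)))) :=
    IsZero.of_mono_eq_zero (R.iUpper.map (R.adj_i₂.counit.app (R.jShriek.obj Z)))
      ((R.isZero_iUpper_jShriek Z).eq_of_tgt _ _)
  exact h0.of_iso (asIso (R.adj_i₁.counit.app (R.iShriek.obj (R.jShriek.obj Z)))).symm

/-- The canonical map `i_* i^! X ⊞ j_! j^* X ⟶ X`. -/
noncomputable def phi (X : A) :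
    R.iStar.obj (R.iShriek.obj X) ⊞ R.jShriek.obj (R.jStar.obj X) ⟶ X :=
  biprod.desc (R.adj_i₂.counit.app X) (R.adj_j₁.counit.app X)

lemma inl_phi (X : A) : biprod.inl ≫ R.phi X = R.adj_i₂.counit.app X :=
  biprod.inl_desc _ _

lemma inr_phi (X : A) : biprod.inr ≫ R.phi X = R.adj_j₁.counit.app X :=
  biprod.inr_desc _ _

lemma isIso_jStar_map_phi (X : A) : IsIso (R.jStar.map (R.phi X)) := by
  haveI := R.jShriek_full; haveI := R.jShriek_faithful
  haveI : R.jStar.Additive := RecAux.additive_of_right R.adj_j₁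
  haveI : IsIso (R.jStar.map (biprod.inr :
      R.jShriek.obj (R.jStar.obj X) ⟶ R.iStar.obj (R.iShriek.obj X) ⊞ _)) :=
    RecAux.isIso_map_biprod_inr R.jStar _ _ (R.isZero_jStar_iStar _)
  have h : R.jStar.map biprod.inr ≫ R.jStar.map (R.phi X) =
      R.jStar.map (R.adj_j₁.counit.app X) := by
    rw [← R.jStar.map_comp, R.inr_phi]
  haveI : IsIso (R.jStar.map biprod.inr ≫ R.jStar.map (R.phi X)) := by
    rw [h]; infer_instance
  exact IsIso.of_isIso_comp_left (R.jStar.map biprod.inr) (R.jStar.map (R.phi X))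

lemma isIso_iShriek_map_phi (h₁ : PreservesFiniteLimits R.iUpper) (X : A) :
    IsIso (R.iShriek.map (R.phi X)) := by
  haveI := R.iStar_full; haveI := R.iStar_faithful
  haveI : R.iShriek.Additive := RecAux.additive_of_right R.adj_i₂
  haveI : IsIso (R.iShriek.map (biprod.inl :
      R.iStar.obj (R.iShriek.obj X) ⟶ _ ⊞ R.jShriek.obj (R.jStar.obj X))) :=
    RecAux.isIso_map_biprod_inl R.iShriek _ _ (R.isZero_iShriek_jShriek h₁ _)
  have h : R.iShriek.map biprod.inl ≫ R.iShriek.map (R.phi X) =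
      R.iShriek.map (R.adj_i₂.counit.app X) := by
    rw [← R.iShriek.map_comp, R.inl_phi]
  haveI : IsIso (R.iShriek.map biprod.inl ≫ R.iShriek.map (R.phi X)) := by
    rw [h]; infer_instance
  exact IsIso.of_isIso_comp_left (R.iShriek.map biprod.inl) (R.iShriek.map (R.phi X))

lemma isIso_phi (h₁ : PreservesFiniteLimits R.iUpper)
    (h₄ : PreservesFiniteColimits R.iShriek) (X : A) : IsIso (R.phi X) := by
  haveI := R.isIso_jStar_map_phi X
  haveI := R.isIso_iShriek_map_phi h₁ X
  haveI := h₄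
  have hmono : Mono (R.phi X) := by
    have hj : IsZero (R.jStar.obj (kernel (R.phi X))) := by
      haveI : PreservesLimitsOfSize.{0, 0} R.jStar := R.adj_j₁.rightAdjoint_preservesLimits
      exact (RecAux.isZero_kernel_of_isIso (R.jStar.map (R.phi X))).of_iso
        (PreservesKernel.iso R.jStar (R.phi X))
    have hi : IsZero (R.iShriek.obj (kernel (R.phi X))) := by
      haveI : PreservesLimitsOfSize.{0, 0} R.iShriek := R.adj_i₂.rightAdjoint_preservesLimits
      exact (RecAux.isZero_kernel_of_isIso (R.iShriek.map (R.phi X))).of_iso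
        (PreservesKernel.iso R.iShriek (R.phi X))
    exact Abelian.mono_of_kernel_ι_eq_zero _
      ((R.isZero_of_pieces _ hj hi).eq_of_src _ _)
  have hepi : Epi (R.phi X) := by
    have hj : IsZero (R.jStar.obj (cokernel (R.phi X))) := by
      haveI : PreservesColimitsOfSize.{0, 0} R.jStar := R.adj_j₂.leftAdjoint_preservesColimits
      exact (RecAux.isZero_cokernel_of_isIso (R.jStar.map (R.phi X))).of_iso
        (PreservesCokernel.iso R.jStar (R.phi X))
    have hi : IsZero (R.iShriek.obj (cokernel (R.phi X))) :=
      (RecAux.isZero_cokernel_of_isIso (R.iShriek.map (R.phi X))).of_iso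
        (PreservesCokernel.iso R.iShriek (R.phi X))
    exact Abelian.epi_of_cokernel_π_eq_zero _
      ((R.isZero_of_pieces _ hj hi).eq_of_tgt _ _)
  exact isIso_of_mono_of_epi _

end Recollement

/-- in a recollement of abelian categories in which both `i^*` and `i^!`
are exact, `i^* ≅ i^!`, `j_! ≅ j_*`, and `A` is equivalent to `B × C`. -/
theorem stmt11 {B A C : Type*} [Category B] [Category A] [Category C]
    [Abelian B] [Abelian A] [Abelian C] (R : Recollement B A C)
    (h₁ : PreservesFiniteLimits R.iUpper) (h₂ : PreservesFiniteColimits R.iUpper)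
    (h₃ : PreservesFiniteLimits R.iShriek) (h₄ : PreservesFiniteColimits R.iShriek) :
    Nonempty (R.iUpper ≅ R.iShriek) ∧ Nonempty (R.jShriek ≅ R.jLower) ∧
    Nonempty (A ≌ B × C) := by
  haveI := R.iStar_full; haveI := R.iStar_faithful
  haveI := R.jShriek_full; haveI := R.jShriek_faithful
  haveI := R.jLower_full; haveI := R.jLower_faithful
  haveI : R.iUpper.Additive := RecAux.additive_of_left R.adj_i₁
  haveI : R.iShriek.Additive := RecAux.additive_of_right R.adj_i₂
  haveI : R.jStar.Additive := RecAux.additive_of_right R.adj_j₁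
  haveI : ∀ X : A, IsIso (R.phi X) := fun X => R.isIso_phi h₁ h₄ X
  haveI := R.adj_i₁.isRightAdjoint  -- i_* preserves zero
  haveI := R.adj_j₂.isRightAdjoint  -- j_* preserves zero
  refine ⟨?_, ?_, ?_⟩
  · -- i^* ≅ i^!
    haveI : IsIso R.adj_i₁.counit := inferInstance
    let μ : R.iShriek ⟶ R.iUpper :=
      Functor.whiskerLeft R.iShriek (inv R.adj_i₁.counit) ≫ Functor.whiskerRight R.adj_i₂.counit R.iUpper
    haveI : ∀ X : A, IsIso (μ.app X) := by
      intro X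
      haveI : IsIso (R.iUpper.map (R.adj_i₂.counit.app X)) := by
        haveI := R.isIso_phi h₁ h₄ X
        have h : R.adj_i₂.counit.app X = biprod.inl ≫ R.phi X := (R.inl_phi X).symm
        haveI : IsIso (R.iUpper.map (biprod.inl :
            R.iStar.obj (R.iShriek.obj X) ⟶ _ ⊞ R.jShriek.obj (R.jStar.obj X))) :=
          RecAux.isIso_map_biprod_inl R.iUpper _ _ (R.isZero_iUpper_jShriek _)
        rw [h, R.iUpper.map_comp]
        infer_instance
      simp only [μ, NatTrans.comp_app, Functor.whiskerLeft_app, Functor.whiskerRight_app]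
      infer_instance
    haveI : IsIso μ := NatIso.isIso_of_isIso_app μ
    exact ⟨(asIso μ).symm⟩
  · -- j_! ≅ j_*
    haveI : IsIso R.adj_j₂.counit := inferInstance
    let ν : R.jShriek ⟶ R.jLower :=
      Functor.whiskerRight (inv R.adj_j₂.counit) R.jShriek ≫ Functor.whiskerLeft R.jLower R.adj_j₁.counit
    haveI : ∀ Z : C, IsIso (ν.app Z) := by
      intro Z
      haveI : IsIso (R.adj_j₁.counit.app (R.jLower.obj Z)) := by
        haveI := R.isIso_phi h₁ h₄ (R.jLower.obj Z)
        have h : R.adj_j₁.counit.app (R.jLower.obj Z) =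
            biprod.inr ≫ R.phi (R.jLower.obj Z) := (R.inr_phi _).symm
        haveI : IsIso (biprod.inr : R.jShriek.obj (R.jStar.obj (R.jLower.obj Z)) ⟶
            R.iStar.obj (R.iShriek.obj (R.jLower.obj Z)) ⊞ _) :=
          RecAux.isIso_biprod_inr (R.iStar.map_isZero (R.isZero_iShriek_jLower Z))
        rw [h]
        infer_instance
      simp only [ν, NatTrans.comp_app, Functor.whiskerLeft_app, Functor.whiskerRight_app]
      infer_instance
    haveI : IsIso ν := NatIso.isIso_of_isIso_app ν
    exact ⟨asIso ν⟩
  · -- A ≌ B × C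
    let F : A ⥤ B × C := R.iShriek.prod' R.jStar
    haveI : F.Faithful := by
      refine ⟨fun {X Y} {f g} h => ?_⟩
      have h1 : R.iShriek.map f = R.iShriek.map g := congrArg Prod.fst h
      have h2 : R.jStar.map f = R.jStar.map g := congrArg Prod.snd h
      haveI := R.isIso_phi h₁ h₄ X
      rw [← cancel_epi (R.phi X)]
      apply biprod.hom_ext'
      · rw [Recollement.phi, biprod.inl_desc_assoc, biprod.inl_desc_assoc,
          ← R.adj_i₂.counit_naturality f, ← R.adj_i₂.counit_naturality g, h1]
      · rw [Recollement.phi, biprod.inr_desc_assoc, biprod.inr_desc_assoc,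
          ← R.adj_j₁.counit_naturality f, ← R.adj_j₁.counit_naturality g, h2]
    haveI : F.Full := by
      refine ⟨fun {X Y} pq => ?_⟩
      let p : R.iShriek.obj X ⟶ R.iShriek.obj Y := pq.1
      let q : R.jStar.obj X ⟶ R.jStar.obj Y := pq.2
      haveI := R.isIso_phi h₁ h₄ X
      haveI := R.isIso_phi h₁ h₄ Y
      let f : X ⟶ Y :=
        inv (R.phi X) ≫ biprod.map (R.iStar.map p) (R.jShriek.map q) ≫ R.phi Y
      have key1 : R.adj_i₂.counit.app X ≫ f = R.iStar.map p ≫ R.adj_i₂.counit.app Y := by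
        simp only [f]
        rw [← R.inl_phi X, Category.assoc, IsIso.hom_inv_id_assoc,
          biprod.inl_map_assoc, R.inl_phi Y]
      have key2 : R.adj_j₁.counit.app X ≫ f = R.jShriek.map q ≫ R.adj_j₁.counit.app Y := by
        simp only [f]
        rw [← R.inr_phi X, Category.assoc, IsIso.hom_inv_id_assoc,
          biprod.inr_map_assoc, R.inr_phi Y]
      refine ⟨f, ?_⟩
      have hp : R.iShriek.map f = p := by
        apply R.iStar.map_injective
        haveI := R.mono_counit_i₂ Y
        rw [← cancel_mono (R.adj_i₂.counit.app Y)]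
        rw [R.adj_i₂.counit_naturality f, key1]
      have hq : R.jStar.map f = q := by
        apply R.jShriek.map_injective
        haveI : Mono (R.adj_j₁.counit.app Y) := by
          rw [show R.adj_j₁.counit.app Y = biprod.inr ≫ R.phi Y from (R.inr_phi Y).symm]
          haveI : Mono (R.phi Y) := inferInstance
          exact mono_comp _ _
        rw [← cancel_mono (R.adj_j₁.counit.app Y)]
        rw [R.adj_j₁.counit_naturality f, key2]
      exact Prod.ext hp hq
    haveI : F.EssSurj := by
      refine ⟨fun YZ => ?_⟩
      obtain ⟨Y, Z⟩ := YZ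
      haveI : IsIso (R.iShriek.map (biprod.inl :
          R.iStar.obj Y ⟶ R.iStar.obj Y ⊞ R.jShriek.obj Z)) :=
        RecAux.isIso_map_biprod_inl R.iShriek _ _ (R.isZero_iShriek_jShriek h₁ Z)
      haveI : IsIso (R.jStar.map (biprod.inr :
          R.jShriek.obj Z ⟶ R.iStar.obj Y ⊞ R.jShriek.obj Z)) :=
        RecAux.isIso_map_biprod_inr R.jStar _ _ (R.isZero_jStar_iStar Y)
      have e1 : Y ≅ R.iShriek.obj (R.iStar.obj Y ⊞ R.jShriek.obj Z) :=
        asIso (R.adj_i₂.unit.app Y) ≪≫ asIso (R.iShriek.map biprod.inl)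
      have e2 : Z ≅ R.jStar.obj (R.iStar.obj Y ⊞ R.jShriek.obj Z) :=
        asIso (R.adj_j₁.unit.app Z) ≪≫ asIso (R.jStar.map biprod.inr)
      exact ⟨R.iStar.obj Y ⊞ R.jShriek.obj Z, ⟨Iso.prod e1.symm e2.symm⟩⟩
    haveI : F.IsEquivalence := {}
    exact ⟨F.asEquivalence⟩
end

section
/- Given a left recollement (B, A, C, i^*, i_*, j_!, j^*) of abelian categories in which A has all products and coproducts, is well-powered, and the canonical morphism from any coproduct to the corresponding product is a monomorphism (e.g. A a Grothendieck category), the essential image of i_* is a torsion class; that is, (Im i_*, (Im i_*)^{⊥₀}) is a torsion pair in A. -/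
open CategoryTheory Limits

/-- A left recollement `(B, A, C, i^*, i_*, j_!, j^*)` of abelian categories:
`i_*` and `j^*` are exact, `i_*` and `j_!` are fully faithful, `(i^*, i_*)` and
`(j_!, j^*)` are adjoint pairs, and the essential image of `i_*` is the kernel of `j^*`. -/
structure LeftRecollement (B A C : Type*) [Category B] [Category A] [Category C]
    [Abelian B] [Abelian A] [Abelian C] where
  iUpper : A ⥤ B      -- i^*
  iStar : B ⥤ A       -- i_*
  jShriek : C ⥤ A     -- j_!
  jStar : A ⥤ C       -- j^*
  iStar_preservesFiniteLimits : PreservesFiniteLimits iStar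
  iStar_preservesFiniteColimits : PreservesFiniteColimits iStar
  jStar_preservesFiniteLimits : PreservesFiniteLimits jStar
  jStar_preservesFiniteColimits : PreservesFiniteColimits jStar
  iStar_full : iStar.Full
  iStar_faithful : iStar.Faithful
  jShriek_full : jShriek.Full
  jShriek_faithful : jShriek.Faithful
  adj_i : iUpper ⊣ iStar
  adj_j : jShriek ⊣ jStar
  im_eq_ker : ∀ X : A, (∃ Y : B, Nonempty (iStar.obj Y ≅ X)) ↔ IsZero (jStar.obj X)

open Classical in
/-- The canonical morphism from the coproduct to the product of a family. -/
noncomputable def coprodToProd {A : Type*} [Category A] [Abelian A]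
    [HasProducts A] [HasCoproducts A] {ι : Type*} (f : ι → A) : ∐ f ⟶ ∏ᶜ f :=
  Sigma.desc fun i => Pi.lift fun j => if h : i = j then eqToHom (congrArg f h) else 0

section Aux

variable {A : Type u₁} {C : Type u₂} [Category.{v₁} A] [Category.{v₁} C]
  [Abelian A] [Abelian C] (F : A ⥤ C)

/-- A subobject of an object killed by an exact functor is killed. -/
lemma aux_zsub [F.PreservesMonomorphisms] {X Y : A} (m : X ⟶ Y) [Mono m]
    (h : IsZero (F.obj Y)) : IsZero (F.obj X) :=
  haveI : Mono (F.map m) := F.map_mono m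
  IsZero.of_mono_eq_zero (F.map m) (h.eq_of_tgt _ _)

/-- A quotient of an object killed by an exact functor is killed. -/
lemma aux_zquot [F.PreservesEpimorphisms] {X Y : A} (e : X ⟶ Y) [Epi e]
    (h : IsZero (F.obj X)) : IsZero (F.obj Y) :=
  haveI : Epi (F.map e) := F.map_epi e
  IsZero.of_epi_eq_zero (F.map e) (h.eq_of_src _ _)

/-- Extension closure: if an exact functor kills the kernel of `t : X ⟶ Y` and kills `Y`,
then it kills `X`. -/
lemma aux_zext [PreservesFiniteLimits F] {X Y : A} (t : X ⟶ Y)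
    (hk : IsZero (F.obj (kernel t))) (hq : IsZero (F.obj Y)) : IsZero (F.obj X) := by
  have h1 : IsZero (kernel (F.map t)) :=
    IsZero.of_iso hk (PreservesKernel.iso F t).symm
  have h2 : kernel.ι (F.map t) = 0 := h1.eq_of_src _ _
  haveI : Mono (F.map t) := Preadditive.mono_of_kernel_zero h2
  exact IsZero.of_mono_eq_zero (F.map t) (hq.eq_of_tgt _ _)

end Aux

section Main

variable {A : Type u} {C : Type u} [Category.{v} A] [Category.{v} C]
  [Abelian A] [Abelian C]

/-- The main construction: given an exact, limit-preserving functor `F : A ⥤ C` on a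
well-powered abelian category `A` with products and coproducts such that the canonical
map from coproducts to products is a monomorphism, every object `X` of `A` has a largest
subobject killed by `F`, and the cokernel of its inclusion admits no nonzero maps from
objects killed by `F`. -/
lemma aux_main (F : A ⥤ C) [PreservesFiniteLimits F] [PreservesFiniteColimits F]
    [PreservesLimitsOfSize.{v, v} F]
    [HasProducts.{v} A] [HasCoproducts.{v} A] [WellPowered.{v} A]
    (hmono : ∀ {ι : Type v} (f : ι → A), Mono (coprodToProd f)) (X : A) :
    ∃ (T₀ : A) (f : T₀ ⟶ X), Mono f ∧ IsZero (F.obj T₀) ∧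
      (∀ (W : A), IsZero (F.obj W) → ∀ g : W ⟶ cokernel f, g = 0) := by
  classical
  -- the torsion subobjects of X
  let P : Subobject X → Prop := fun S => IsZero (F.obj (S : A))
  let e := equivShrink.{v} {S : Subobject X // P S}
  let fam : Shrink.{v} {S : Subobject X // P S} → A := fun i => ((e.symm i).1 : A)
  let d : ∐ fam ⟶ X := Sigma.desc fun i => (e.symm i).1.arrow
  have hT0 : IsZero (F.obj (image d)) := by
    have hprod : IsZero (F.obj (∏ᶜ fam)) := by
      have hl : IsLimit (F.mapCone (limit.cone (Discrete.functor fam))) :=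
        isLimitOfPreserves F (limit.isLimit _)
      exact IsZero.of_mono_eq_zero (𝟙 _)
        (hl.hom_ext fun j => ((e.symm j.as).2).eq_of_tgt _ _)
    have hTcop : IsZero (F.obj (∐ fam)) := by
      haveI := hmono fam
      haveI : Mono (F.map (coprodToProd fam)) := F.map_mono _
      exact IsZero.of_mono_eq_zero (F.map (coprodToProd fam)) (hprod.eq_of_tgt _ _)
    exact aux_zquot F (factorThruImage d) hTcop
  refine ⟨image d, image.ι d, inferInstance, hT0, ?_⟩
  -- maximality: every torsion subobject factors through `image d`
  have hmax : ∀ (Y : A) (m : Y ⟶ X), Mono m → IsZero (F.obj Y) →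
      ∃ h : Y ⟶ image d, h ≫ image.ι d = m := by
    intro Y m hm hY
    haveI := hm
    have hP : P (Subobject.mk m) :=
      IsZero.of_iso hY (F.mapIso (Subobject.underlyingIso m))
    set i := e ⟨Subobject.mk m, hP⟩ with hi
    have he : (e.symm i).1 = Subobject.mk m := by
      rw [hi, e.symm_apply_apply]
    have hle : Subobject.mk m ≤ (e.symm i).1 := le_of_eq he.symm
    refine ⟨(Subobject.underlyingIso m).inv ≫ Subobject.ofLE _ _ hle ≫
      Sigma.ι fam i ≫ factorThruImage d, ?_⟩
    have h1 : Sigma.ι fam i ≫ d = (e.symm i).1.arrow := by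
      simp [d]
    rw [Category.assoc, Category.assoc, Category.assoc, image.fac, h1,
      Subobject.ofLE_arrow, Subobject.underlyingIso_arrow]
  -- the cokernel has no torsion subobjects
  intro W hW g
  -- replace `g` by its image
  have hI : IsZero (F.obj (image g)) := aux_zquot F (factorThruImage g) hW
  set m : image g ⟶ cokernel (image.ι d) := image.ι g with hm
  set π : X ⟶ cokernel (image.ι d) := cokernel.π (image.ι d) with hπ
  -- pull back `m` along `π`
  let Q := pullback m π
  haveI : Mono (pullback.snd m π) := inferInstance
  haveI : Epi (pullback.fst m π) := inferInstance
  -- the kernel of `pullback.fst` is a subobject of `image d`, hence killed by `F`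
  have hker0 : (kernel.ι (pullback.fst m π) ≫ pullback.snd m π) ≫ π = 0 := by
    rw [Category.assoc, ← pullback.condition, ← Category.assoc, kernel.condition,
      zero_comp]
  let w : kernel (pullback.fst m π) ⟶ image d :=
    Abelian.monoLift (image.ι d) _ hker0
  have hw : w ≫ image.ι d = kernel.ι (pullback.fst m π) ≫ pullback.snd m π :=
    Abelian.monoLift_comp _ _ _
  haveI : Mono (kernel.ι (pullback.fst m π) ≫ pullback.snd m π) := mono_comp _ _
  haveI : Mono w := by
    have : Mono (w ≫ image.ι d) := by rw [hw]; infer_instance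
    exact mono_of_mono w (image.ι d)
  have hkerz : IsZero (F.obj (kernel (pullback.fst m π))) := aux_zsub F w hT0
  -- hence the pullback is killed by `F`, by extension closure
  have hQz : IsZero (F.obj Q) := aux_zext F (pullback.fst m π) hkerz hI
  -- so the pullback, as a subobject of `X`, factors through `image d`
  obtain ⟨h, hh⟩ := hmax Q (pullback.snd m π) inferInstance hQz
  -- therefore `pullback.fst ≫ m = pullback.snd ≫ π = 0`, so `m = 0`, so `g = 0`
  have hzero : pullback.fst m π ≫ m = 0 := by
    rw [pullback.condition, ← hh, Category.assoc]
    have hc : image.ι d ≫ π = 0 := cokernel.condition _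
    rw [hc, comp_zero]
  have hm0 : m = 0 := by
    rw [← cancel_epi (pullback.fst m π), hzero, comp_zero]
  calc g = factorThruImage g ≫ m := by rw [hm, image.fac]
    _ = 0 := by rw [hm0, comp_zero]

end Main

/-- given a left recollement with `A` having products and coproducts,
well-powered, and with the canonical map from any coproduct to the product a
monomorphism (e.g. `A` Grothendieck), `(Im i_*, (Im i_*)^{⊥₀})` is a torsion pair. -/
theorem stmt12 {B A C : Type u} [Category.{v} B] [Category.{v} A] [Category.{v} C]
    [Abelian B] [Abelian A] [Abelian C] (R : LeftRecollement B A C)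
    [HasProducts.{v} A] [HasCoproducts.{v} A] [WellPowered.{v} A]
    (hmono : ∀ {ι : Type v} (f : ι → A), Mono (coprodToProd f)) :
    (∀ (X Y : A), (∃ Z : B, Nonempty (R.iStar.obj Z ≅ X)) →
      (∀ (Z : B) (g : R.iStar.obj Z ⟶ Y), g = 0) → ∀ f : X ⟶ Y, f = 0) ∧
    (∀ X : A, ∃ (T₀ : A) (f : T₀ ⟶ X), Mono f ∧
      (∃ Z : B, Nonempty (R.iStar.obj Z ≅ T₀)) ∧
      (∀ (Z : B) (g : R.iStar.obj Z ⟶ cokernel f), g = 0)) := by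
  constructor
  · rintro X Y ⟨Z, ⟨e⟩⟩ hY f
    have h := hY Z (e.hom ≫ f)
    calc f = e.inv ≫ (e.hom ≫ f) := by simp
      _ = 0 := by rw [h, comp_zero]
  · intro X
    haveI := R.jStar_preservesFiniteLimits
    haveI := R.jStar_preservesFiniteColimits
    haveI : PreservesLimitsOfSize.{v, v} R.jStar := R.adj_j.rightAdjoint_preservesLimits
    obtain ⟨T₀, f, hf, hT, hcoker⟩ := aux_main R.jStar hmono X
    refine ⟨T₀, f, hf, (R.im_eq_ker T₀).mpr hT, ?_⟩
    intro Z g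
    exact hcoker (R.iStar.obj Z) ((R.im_eq_ker _).mp ⟨Z, ⟨Iso.refl _⟩⟩) g
end

section
/- Given a left recollement (B, A, C, i^*, i_*, j_!, j^*) of abelian categories, for every object A of A there is an exact sequence 0 ⟶ i_* B ⟶ j_! j^* A ⟶ A ⟶ i_* i^* A ⟶ 0 for some object B of B, where the middle map is the counit of (j_!, j^*) and the last map is the unit of (i^*, i_*). -/
open CategoryTheory Limits

namespace LeftRecollement

variable {B A C : Type*} [Category B] [Category A] [Category C]
    [Abelian B] [Abelian A] [Abelian C] (R : LeftRecollement B A C)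

/-- Any morphism from an object in the image of `j_!` to an object in the image of `i_*`
is zero. -/
lemma hom_zero {c : C} {b : B} (g : R.jShriek.obj c ⟶ R.iStar.obj b) : g = 0 := by
  have hz : IsZero (R.jStar.obj (R.iStar.obj b)) := (R.im_eq_ker _).mp ⟨b, ⟨Iso.refl _⟩⟩
  apply (R.adj_j.homEquiv c (R.iStar.obj b)).injective
  exact hz.eq_of_tgt _ _

/-- If both `i^* Q` and `j^* Q` vanish, then `Q` vanishes. -/
lemma isZero_of {Q : A} (h1 : IsZero (R.iUpper.obj Q)) (h2 : IsZero (R.jStar.obj Q)) :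
    IsZero Q := by
  obtain ⟨W, ⟨e⟩⟩ := (R.im_eq_ker Q).mpr h2
  have hinv : e.inv = 0 := by
    apply (R.adj_i.homEquiv Q W).symm.injective
    exact h1.eq_of_src _ _
  exact IsZero.of_mono_eq_zero e.inv hinv

end LeftRecollement

/-- for every object `X` there is an exact sequence
`0 ⟶ i_* Y ⟶ j_! j^* X ⟶ X ⟶ i_* i^* X ⟶ 0` for some `Y : B`, where the middle
map is the counit of `(j_!, j^*)` and the last map the unit of `(i^*, i_*)`. -/
theorem stmt13 {B A C : Type*} [Category B] [Category A] [Category C]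
    [Abelian B] [Abelian A] [Abelian C] (R : LeftRecollement B A C) (X : A) :
    ∃ (Y : B) (f : R.iStar.obj Y ⟶ R.jShriek.obj (R.jStar.obj X))
      (w₁ : f ≫ R.adj_j.counit.app X = 0)
      (w₂ : R.adj_j.counit.app X ≫ R.adj_i.unit.app X = 0),
      Mono f ∧ Epi (R.adj_i.unit.app X) ∧
      (ShortComplex.mk f (R.adj_j.counit.app X) w₁).Exact ∧
      (ShortComplex.mk (R.adj_j.counit.app X) (R.adj_i.unit.app X) w₂).Exact := by
  haveI := R.jShriek_full
  haveI := R.jShriek_faithful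
  haveI := R.iStar_full
  haveI := R.iStar_faithful
  haveI := R.jStar_preservesFiniteLimits
  haveI := R.jStar_preservesFiniteColimits
  haveI := R.adj_i.leftAdjoint_preservesColimits
  set ε := R.adj_j.counit.app X with hε
  set η := R.adj_i.unit.app X with hη
  -- `j^* ε` is an isomorphism since `j_!` is fully faithful
  haveI hjε : IsIso (R.jStar.map ε) := by
    rw [hε]; infer_instance
  -- `i^* η` is an isomorphism since `i_*` is fully faithful
  haveI hiη : IsIso (R.iUpper.map η) := by
    rw [hη]; infer_instance
  -- the kernel of `ε` has vanishing `j^*`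
  have hker : IsZero (R.jStar.obj (kernel ε)) := by
    refine IsZero.of_iso ?_ (PreservesKernel.iso R.jStar ε)
    refine IsZero.of_mono_eq_zero (kernel.ι (R.jStar.map ε)) ?_
    rw [← cancel_mono (R.jStar.map ε), kernel.condition, zero_comp]
  obtain ⟨Y, ⟨e⟩⟩ := (R.im_eq_ker _).mpr hker
  -- the cokernel of `ε` has vanishing `j^*`
  have hcoker : IsZero (R.jStar.obj (cokernel ε)) := by
    refine IsZero.of_iso ?_ (PreservesCokernel.iso R.jStar ε)
    refine IsZero.of_epi_eq_zero (cokernel.π (R.jStar.map ε)) ?_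
    rw [← cancel_epi (R.jStar.map ε), cokernel.condition, comp_zero]
  obtain ⟨Z, ⟨eZ⟩⟩ := (R.im_eq_ker _).mpr hcoker
  -- the projection to the cokernel of `ε` factors through `η`
  set g : R.iUpper.obj X ⟶ Z := (R.adj_i.homEquiv X Z).symm (cokernel.π ε ≫ eZ.inv) with hg
  have hfac : η ≫ R.iStar.map g = cokernel.π ε ≫ eZ.inv := by
    have h := (R.adj_i.homEquiv X Z).apply_symm_apply (cokernel.π ε ≫ eZ.inv)
    rwa [Adjunction.homEquiv_unit] at h
  have hπ : cokernel.π ε = η ≫ R.iStar.map g ≫ eZ.hom := by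
    rw [← Category.assoc, hfac, Category.assoc, eZ.inv_hom_id, Category.comp_id]
  -- `ε ≫ η = 0`
  have w₂ : ε ≫ η = 0 := R.hom_zero _
  -- `η` is epi
  have hepi : Epi η := by
    refine Preadditive.epi_of_isZero_cokernel η ?_
    refine R.isZero_of ?_ ?_
    · refine IsZero.of_iso ?_ (PreservesCokernel.iso R.iUpper η)
      refine IsZero.of_epi_eq_zero (cokernel.π (R.iUpper.map η)) ?_
      rw [← cancel_epi (R.iUpper.map η), cokernel.condition, comp_zero]
    · refine IsZero.of_iso ?_ (PreservesCokernel.iso R.jStar η)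
      have hz : IsZero (R.jStar.obj (R.iStar.obj (R.iUpper.obj X))) :=
        (R.im_eq_ker _).mp ⟨_, ⟨Iso.refl _⟩⟩
      refine IsZero.of_epi_eq_zero (cokernel.π (R.jStar.map η)) ?_
      exact hz.eq_of_src _ _
  -- the first map
  refine ⟨Y, e.hom ≫ kernel.ι ε, by rw [Category.assoc, kernel.condition, comp_zero], w₂,
    inferInstance, hepi, ?_, ?_⟩
  · -- exactness at `j_! j^* X`: the first map is a kernel of `ε`
    apply ShortComplex.exact_of_f_is_kernel
    exact (kernelIsKernel ε).ofIsoLimit (Fork.ext e.symm (by simp))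
  · -- exactness at `X`
    rw [ShortComplex.exact_iff_kernel_ι_comp_cokernel_π_zero]
    dsimp only [ShortComplex.mk]
    rw [hπ, ← Category.assoc, kernel.condition, zero_comp]
end

section
/- Given a left recollement (B, A, C, i^*, i_*, j_!, j^*) of abelian categories, the pair (Ker i^*, Im i_*) is a torsion pair in A, where Ker i^* = ^{⊥₀}(Im i_*) := {A | Hom(A, i_* B) = 0 for all B ∈ B}; the torsion decomposition of A is 0 ⟶ ker(η_A) ⟶ A ⟶ i_* i^* A ⟶ 0 with η the unit of (i^*, i_*). -/
open CategoryTheory Limits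

/-- If a zero object maps epimorphically onto `Y`, then `Y` is zero. -/
lemma isZero_of_epi_of_isZero {A : Type*} [Category A] [Abelian A] {X Y : A}
    (hX : IsZero X) (e : X ⟶ Y) [Epi e] : IsZero Y := by
  rw [IsZero.iff_id_eq_zero]
  have : e ≫ 𝟙 Y = e ≫ 0 := hX.eq_of_src _ _
  exact (cancel_epi e).1 this

/-- If a zero morphism is epi, its target is zero. -/
lemma isZero_of_epi_zero {A : Type*} [Category A] [Abelian A] {X Y : A}
    (e : X ⟶ Y) [Epi e] (h : e = 0) : IsZero Y := by
  rw [IsZero.iff_id_eq_zero]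
  have : e ≫ 𝟙 Y = e ≫ 0 := by rw [h, zero_comp, zero_comp]
  exact (cancel_epi e).1 this

/-- `(Ker i^*, Im i_*)` is a torsion pair in `A`, where
`Ker i^* = ^{⊥₀}(Im i_*)`; the torsion decomposition of `X` is
`0 ⟶ ker(η_X) ⟶ X ⟶ i_* i^* X ⟶ 0` with `η` the unit of `(i^*, i_*)`. -/
theorem stmt14 {B A C : Type*} [Category B] [Category A] [Category C]
    [Abelian B] [Abelian A] [Abelian C] (R : LeftRecollement B A C) :
    (∀ X : A, IsZero (R.iUpper.obj X) ↔ ∀ (Y : B) (f : X ⟶ R.iStar.obj Y), f = 0) ∧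
    (∀ (X Y : A), IsZero (R.iUpper.obj X) → (∃ Z : B, Nonempty (R.iStar.obj Z ≅ Y)) →
      ∀ f : X ⟶ Y, f = 0) ∧
    (∀ X : A, Epi (R.adj_i.unit.app X) ∧
      IsZero (R.iUpper.obj (kernel (R.adj_i.unit.app X)))) := by
  haveI := R.iStar_full
  haveI := R.iStar_faithful
  haveI := R.jStar_preservesFiniteLimits
  haveI := R.jStar_preservesFiniteColimits
  haveI : R.iStar.IsRightAdjoint := R.adj_i.isRightAdjoint
  haveI : R.jStar.IsRightAdjoint := R.adj_j.isRightAdjoint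
  -- Every map `X ⟶ i_* Y` factors through the unit.
  have fac : ∀ (X : A) (Y : B) (f : X ⟶ R.iStar.obj Y),
      f = R.adj_i.unit.app X ≫ R.iStar.map ((R.adj_i.homEquiv X Y).symm f) := by
    intro X Y f
    conv_lhs => rw [← (R.adj_i.homEquiv X Y).apply_symm_apply f]
    rw [Adjunction.homEquiv_unit]
  have part1 : ∀ X : A,
      IsZero (R.iUpper.obj X) ↔ ∀ (Y : B) (f : X ⟶ R.iStar.obj Y), f = 0 := by
    intro X
    constructor
    · intro hz Y f
      rw [fac X Y f, hz.eq_of_src ((R.adj_i.homEquiv X Y).symm f) 0, Functor.map_zero,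
        comp_zero]
    · intro h
      rw [IsZero.iff_id_eq_zero]
      apply (R.adj_i.homEquiv X _).injective
      rw [Adjunction.homEquiv_unit, Adjunction.homEquiv_unit,
        h _ (R.adj_i.unit.app X)]
      simp [R.iStar.map_zero]
  refine ⟨part1, ?_, ?_⟩
  · intro X Y hX ⟨Z, ⟨e⟩⟩ f
    have h0 : f ≫ e.inv = 0 := (part1 X).1 hX Z (f ≫ e.inv)
    calc f = (f ≫ e.inv) ≫ e.hom := by simp
    _ = 0 := by rw [h0, zero_comp]
  · intro X
    set η := R.adj_i.unit.app X with hη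
    -- `j^*` kills the essential image of `i_*`.
    have htz : IsZero (R.jStar.obj (R.iStar.obj (R.iUpper.obj X))) :=
      (R.im_eq_ker _).1 ⟨_, ⟨Iso.refl _⟩⟩
    -- Step 1: the unit is epi.
    have hjc : IsZero (R.jStar.obj (cokernel η)) := by
      have h1 : IsZero (cokernel (R.jStar.map η)) :=
        isZero_of_epi_of_isZero htz (cokernel.π (R.jStar.map η))
      exact h1.of_iso (PreservesCokernel.iso R.jStar η)
    obtain ⟨W, ⟨e⟩⟩ := (R.im_eq_ker _).2 hjc
    obtain ⟨u, hu⟩ := R.iStar.map_surjective (cokernel.π η ≫ e.inv)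
    have hu0 : u = 0 := by
      apply (R.adj_i.homEquiv X W).injective
      rw [Adjunction.homEquiv_unit, Adjunction.homEquiv_unit, Functor.map_zero, comp_zero,
        hu, ← Category.assoc, ← hη, cokernel.condition, zero_comp]
    have hmap0 : cokernel.π η ≫ e.inv = 0 := by
      rw [← hu, hu0, Functor.map_zero]
    have hW : IsZero (R.iStar.obj W) := isZero_of_epi_zero _ hmap0
    have hc : IsZero (cokernel η) := hW.of_iso e.symm
    have hepi : Epi η := Preadditive.epi_of_isZero_cokernel η hc
    refine ⟨hepi, ?_⟩
    -- Step 2: the kernel of the unit is killed by `i^*`.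
    set ι := kernel.ι η with hι
    -- the short exact sequence `0 → ker η → X → i_* i^* X → 0`
    let S : ShortComplex A := ⟨ι, η, kernel.condition η⟩
    have hS : S.ShortExact :=
      { exact := S.exact_of_f_is_kernel (kernelIsKernel η)
        mono_f := by dsimp [S]; infer_instance
        epi_g := hepi }
    have hSj := hS.map_of_exact R.jStar
    have hg0 : (S.map R.jStar).g = 0 := htz.eq_of_tgt _ _
    have hιepi : Epi (R.jStar.map ι) := hSj.exact.epi_f hg0
    apply (part1 _).2
    intro Z g
    have hpz : IsZero (R.jStar.obj (R.iStar.obj Z)) :=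
      (R.im_eq_ker _).1 ⟨Z, ⟨Iso.refl _⟩⟩
    -- the pushout of `ι` along `g` lies in the essential image of `i_*`
    have hpj : IsZero (R.jStar.obj (pushout ι g)) := by
      haveI := hιepi
      have h1 : IsZero (pushout (R.jStar.map ι) (R.jStar.map g)) :=
        isZero_of_epi_of_isZero hpz (pushout.inr (R.jStar.map ι) (R.jStar.map g))
      exact h1.of_iso (PreservesPushout.iso R.jStar ι g).symm
    obtain ⟨W', ⟨e'⟩⟩ := (R.im_eq_ker _).2 hpj
    -- any map from `X` into the essential image of `i_*` kills `ker η`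
    have hι0 : ι ≫ pushout.inl ι g = 0 := by
      have h2 : ι ≫ (pushout.inl ι g ≫ e'.inv) = 0 := by
        rw [fac X W' (pushout.inl ι g ≫ e'.inv), ← Category.assoc, ← hη,
          kernel.condition, zero_comp]
      calc ι ≫ pushout.inl ι g = (ι ≫ (pushout.inl ι g ≫ e'.inv)) ≫ e'.hom := by simp
      _ = 0 := by rw [h2, zero_comp]
    have hg : g ≫ pushout.inr ι g = 0 := by rw [← pushout.condition, hι0]
    exact zero_of_comp_mono (pushout.inr ι g) hg
end

section
/- Let K be a field, R = ∏_{i=1}^∞ K the countable product ring, and I = ⊕_{i=1}^∞ K the ideal of finitely supported elements. Then the class T = {M : Mod R | M·I = M} is closed under submodules; equivalently, the class G = {M : Mod R | M·I = 0} is closed under injective envelopes: if M·I = 0 then E(M)·I = 0 for an injective envelope E(M) of M. -/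
open Function

variable (K : Type) [Field K]

/-- The ideal `I = ⊕_{i∈ℕ} K` of finitely supported elements of `R = ∏_{i∈ℕ} K`. -/
def finSuppIdeal : Ideal (∀ _ : ℕ, K) where
  carrier := {r | (Function.support r).Finite}
  add_mem' := fun ha hb => Set.Finite.subset (ha.union hb) (Function.support_add _ _)
  zero_mem' := by simp [Function.support_zero]
  smul_mem' := fun c x hx => Set.Finite.subset hx (fun i hi => by
    simp only [Function.mem_support] at hi ⊢
    intro h
    exact hi (by simp [h]))

open Classical in
/-- The indicator of the support of `r`. -/
private noncomputable def ind (r : ∀ _ : ℕ, K) : ∀ _ : ℕ, K := fun i => if r i = 0 then 0 else 1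

private lemma ind_mem {r : ∀ _ : ℕ, K} (hr : r ∈ finSuppIdeal K) :
    ind K r ∈ finSuppIdeal K := by
  refine Set.Finite.subset hr fun i hi => ?_
  classical
  simp only [Function.mem_support, ind] at hi ⊢
  intro h
  simp [h] at hi

private lemma ind_mul (r : ∀ _ : ℕ, K) : ind K r * r = r := by
  funext i
  classical
  by_cases h : r i = 0 <;> simp [ind, h]

private lemma exists_idem_finSupp {M : Type} [AddCommGroup M] [Module (∀ _ : ℕ, K) M]
    {m : M} (hm : m ∈ finSuppIdeal K • (⊤ : Submodule (∀ _ : ℕ, K) M)) :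
    ∃ e ∈ finSuppIdeal K, e • m = m := by
  refine Submodule.smul_induction_on hm ?_ ?_
  · intro r hr n _
    exact ⟨ind K r, ind_mem K hr, by rw [← mul_smul, ind_mul]⟩
  · rintro x y ⟨e₁, he₁, hx⟩ ⟨e₂, he₂, hy⟩
    refine ⟨e₁ + e₂ - e₁ * e₂, ?_, ?_⟩
    · exact sub_mem (add_mem he₁ he₂) (Ideal.mul_mem_right _ _ he₁)
    · have h1 : (e₁ * e₂) • x = e₂ • x := by rw [mul_comm, mul_smul, hx]
      have h2 : (e₁ * e₂) • y = e₁ • y := by rw [mul_smul, hy]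
      rw [smul_add, sub_smul, add_smul, sub_smul, add_smul, h1, h2, hx, hy]
      abel

/-- for `R = ∏_{i=1}^∞ K` and `I = ⊕_{i=1}^∞ K`, the class
`T = {M | M·I = M}` is closed under submodules; equivalently, the class
`G = {M | M·I = 0}` is closed under injective envelopes. -/
theorem stmt18 :
    (∀ (M : Type) [AddCommGroup M] [Module (∀ _ : ℕ, K) M],
      finSuppIdeal K • (⊤ : Submodule (∀ _ : ℕ, K) M) = ⊤ →
      ∀ N : Submodule (∀ _ : ℕ, K) M, finSuppIdeal K • N = N) ∧
    (∀ (M E : Type) [AddCommGroup M] [Module (∀ _ : ℕ, K) M]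
      [AddCommGroup E] [Module (∀ _ : ℕ, K) E],
      Module.Injective (∀ _ : ℕ, K) E →
      ∀ f : M →ₗ[(∀ _ : ℕ, K)] E, Function.Injective f →
      (∀ P : Submodule (∀ _ : ℕ, K) E, P ≠ ⊥ → P ⊓ LinearMap.range f ≠ ⊥) →
      finSuppIdeal K • (⊤ : Submodule (∀ _ : ℕ, K) M) = ⊥ →
      finSuppIdeal K • (⊤ : Submodule (∀ _ : ℕ, K) E) = ⊥) := by
  constructor
  · intro M _ _ hM N
    refine le_antisymm (Submodule.smul_le.2 fun r _ n hn => N.smul_mem r hn) ?_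
    intro m hm
    obtain ⟨e, he, hem⟩ := exists_idem_finSupp K (hM.ge Submodule.mem_top)
    have h2 := Submodule.smul_mem_smul he hm
    rwa [hem] at h2
  · intro M E _ _ _ _ _inj f hf hess hM
    have hM0 : ∀ r ∈ finSuppIdeal K, ∀ m : M, r • m = 0 := by
      intro r hr m
      have h : r • m ∈ finSuppIdeal K • (⊤ : Submodule (∀ _ : ℕ, K) M) :=
        Submodule.smul_mem_smul hr Submodule.mem_top
      rwa [hM, Submodule.mem_bot] at h
    have key : ∀ b ∈ finSuppIdeal K, ∀ x : E, b • x = 0 := by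
      intro b hb x
      by_contra hbx
      have hP : Submodule.span (∀ _ : ℕ, K) {b • x} ≠ ⊥ := by
        simp [Submodule.span_singleton_eq_bot, hbx]
      obtain ⟨y, hy, hy0⟩ := (Submodule.ne_bot_iff _).1 (hess _ hP)
      obtain ⟨r, hr⟩ := Submodule.mem_span_singleton.1 hy.1
      obtain ⟨m, hm⟩ := hy.2
      have hey : ind K b • y = y := by
        rw [← hr, ← mul_smul, ← mul_smul, mul_assoc, mul_left_comm, ind_mul, mul_smul]
      have hey0 : ind K b • y = 0 := by
        rw [← hm, ← map_smul, hM0 _ (ind_mem K hb) m, map_zero]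
      exact hy0 (hey.symm.trans hey0)
    exact le_bot_iff.1 (Submodule.smul_le.2 fun r hr x _ =>
      (Submodule.mem_bot _).2 (key r hr x))
end
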